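/- arXiv:1507.04391 — 11 statements merged into one kernel-verified Lean document; each statement's English description precedes it below -/
import Mathlib

section
/- There is an absolute constant C > 0 with the following property. Let G be a graph with vertex set {1,…,n}, m ≥ 1 edges and average degree Δ = 2m/n; let x ∈ {0,1}^n, α1 ∈ (0,1), α2 > 0, and let r ≥ C·n·ln(n)/(α1²·α2·Δ) be a positive integer. Let R_1,…,R_r be drawn independently and uniformly at random (with replacement) from {1,…,n}. Fix a vertex j and set ρ_j = (n/r)·Σ_{l=1}^r 1[R_l ∈ N(j)]·x_{R_l} and ρ̂_j = Σ_{i∈N(j)} x_i. Then with probability at least 1 − 2/n³: (1−α1)·ρ̂_j − (1−α1)·α2·Δ ≤ ρ_j ≤ (1+α1)·ρ̂_j + (1+α1)·α2·Δ. -/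
open Finset

-- log(1+u) ≥ u/(1+u)
private lemma log_ge_self_div (u : ℝ) (hu : 0 ≤ u) : u / (1+u) ≤ Real.log (1+u) := by
  have h1 : (0:ℝ) < 1 + u := by linarith
  have := Real.one_sub_inv_le_log_of_pos h1
  have h2 : 1 - (1+u)⁻¹ = u/(1+u) := by field_simp; ring
  linarith [h2 ▸ this]

private lemma hasDeriv_aux1 (x : ℝ) (hx : (0:ℝ) < 1 + x) :
    HasDerivAt (fun u : ℝ => (2+u) * Real.log (1+u) - 2*u)
      (Real.log (1+x) + (2+x)/(1+x) - 2) x := by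
  have h1 : HasDerivAt (fun u : ℝ => 1+u) 1 x := by
    simpa using (hasDerivAt_id x).const_add (1:ℝ)
  have h2 : HasDerivAt (fun u : ℝ => Real.log (1+u)) (1/(1+x)) x := by
    simpa using h1.log (ne_of_gt hx)
  have h3 : HasDerivAt (fun u : ℝ => 2+u) 1 x := by
    simpa using (hasDerivAt_id x).const_add (2:ℝ)
  have h4 := h3.mul h2
  have h5 : HasDerivAt (fun u : ℝ => 2*u) 2 x := by
    simpa using (hasDerivAt_id x).const_mul (2:ℝ)
  refine (h4.sub h5).congr_deriv ?_
  ring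

-- L1 : 2u ≤ (2+u) log(1+u) for u ≥ 0
private lemma log_ge_pade (u : ℝ) (hu : 0 ≤ u) : 2*u ≤ (2+u) * Real.log (1+u) := by
  have key : MonotoneOn (fun u : ℝ => (2+u) * Real.log (1+u) - 2*u) (Set.Ici 0) := by
    apply monotoneOn_of_deriv_nonneg (convex_Ici 0)
    · intro y hy
      have hy' : (0:ℝ) < 1 + y := by simp at hy; linarith
      exact (hasDeriv_aux1 y hy').continuousAt.continuousWithinAt
    · intro y hy
      rw [interior_Ici] at hy
      have hy' : (0:ℝ) < 1 + y := by simp at hy; linarith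
      exact (hasDeriv_aux1 y hy').differentiableAt.differentiableWithinAt
    · intro y hy
      rw [interior_Ici] at hy
      simp only [Set.mem_Ioi] at hy
      have hy' : (0:ℝ) < 1 + y := by linarith
      rw [(hasDeriv_aux1 y hy').deriv]
      have := log_ge_self_div y hy.le
      have h2 : (2+y)/(1+y) - 2 = -y/(1+y) := by field_simp; ring
      have h4 : -y/(1+y) = -(y/(1+y)) := by ring
      linarith [log_ge_self_div y hy.le]
  have h0 := key (Set.self_mem_Ici) (Set.mem_Ici.2 hu) hu
  simp at h0
  linarith

-- h_plus : u² ≤ (2+u)((1+u)log(1+u) − u)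
private lemma hasDeriv_aux2 (x : ℝ) (hx : (0:ℝ) < 1 + x) :
    HasDerivAt (fun u : ℝ => (2+u) * ((1+u) * Real.log (1+u) - u) - u^2)
      ((3+2*x) * Real.log (1+x) - 3*x) x := by
  have h1 : HasDerivAt (fun u : ℝ => 1+u) 1 x := by
    simpa using (hasDerivAt_id x).const_add (1:ℝ)
  have h2 : HasDerivAt (fun u : ℝ => Real.log (1+u)) (1/(1+x)) x := by
    simpa using h1.log (ne_of_gt hx)
  have h3 : HasDerivAt (fun u : ℝ => 2+u) 1 x := by
    simpa using (hasDerivAt_id x).const_add (2:ℝ)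
  have hQ : HasDerivAt (fun u : ℝ => (1+u) * Real.log (1+u) - u) (Real.log (1+x)) x := by
    have := (h1.mul h2).sub (hasDerivAt_id x)
    refine this.congr_deriv ?_
    field_simp
    ring
  have h4 := (h3.mul hQ).sub ((hasDerivAt_pow 2 x))
  refine h4.congr_deriv ?_
  push_cast
  ring

private lemma h_plus (u : ℝ) (hu : 0 ≤ u) : u^2 ≤ (2+u) * ((1+u) * Real.log (1+u) - u) := by
  have key : MonotoneOn (fun u : ℝ => (2+u) * ((1+u) * Real.log (1+u) - u) - u^2) (Set.Ici 0) := by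
    apply monotoneOn_of_deriv_nonneg (convex_Ici 0)
    · intro y hy
      have hy' : (0:ℝ) < 1 + y := by simp at hy; linarith
      exact (hasDeriv_aux2 y hy').continuousAt.continuousWithinAt
    · intro y hy
      rw [interior_Ici] at hy
      have hy' : (0:ℝ) < 1 + y := by simp at hy; linarith
      exact (hasDeriv_aux2 y hy').differentiableAt.differentiableWithinAt
    · intro y hy
      rw [interior_Ici] at hy
      simp only [Set.mem_Ioi] at hy
      have hy' : (0:ℝ) < 1 + y := by linarith
      rw [(hasDeriv_aux2 y hy').deriv]
      have hp := log_ge_pade y hy.le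
      have hl : 0 ≤ Real.log (1+y) := Real.log_nonneg (by linarith)
      nlinarith [mul_le_mul_of_nonneg_left hp (show (0:ℝ) ≤ 3+2*y by linarith)]
  have h0 := key (Set.self_mem_Ici) (Set.mem_Ici.2 hu) hu
  simp at h0
  nlinarith [h0]

-- h_minus : u² ≤ 2((1−u)log(1−u) + u) for 0 ≤ u < 1
private lemma hasDeriv_aux3 (x : ℝ) (hx : (0:ℝ) < 1 - x) :
    HasDerivAt (fun u : ℝ => 2*((1-u) * Real.log (1-u) + u) - u^2)
      (2*(-Real.log (1-x)) - 2*x) x := by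
  have h1 : HasDerivAt (fun u : ℝ => 1-u) (-1) x := by
    simpa using (hasDerivAt_id x).const_sub (1:ℝ)
  have h2 : HasDerivAt (fun u : ℝ => Real.log (1-u)) (-1/(1-x)) x := by
    simpa using h1.log (ne_of_gt hx)
  have h4 := (((h1.mul h2).add (hasDerivAt_id x)).const_mul 2).sub (hasDerivAt_pow 2 x)
  refine h4.congr_deriv ?_
  push_cast
  field_simp
  ring
private lemma h_minus (u : ℝ) (hu : 0 ≤ u) (hu1 : u < 1) :
    u^2 ≤ 2*((1-u) * Real.log (1-u) + u) := by
  have key : MonotoneOn (fun u : ℝ => 2*((1-u) * Real.log (1-u) + u) - u^2) (Set.Ico 0 1) := by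
    apply monotoneOn_of_deriv_nonneg (convex_Ico 0 1)
    · intro y hy
      have hy' : (0:ℝ) < 1 - y := by simp [Set.mem_Ico] at hy; linarith [hy.2]
      exact (hasDeriv_aux3 y hy').continuousAt.continuousWithinAt
    · intro y hy
      rw [interior_Ico] at hy
      have hy' : (0:ℝ) < 1 - y := by simp [Set.mem_Ioo] at hy; linarith [hy.2]
      exact (hasDeriv_aux3 y hy').differentiableAt.differentiableWithinAt
    · intro y hy
      rw [interior_Ico] at hy
      simp only [Set.mem_Ioo] at hy
      have hy' : (0:ℝ) < 1 - y := by linarith [hy.2]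
      rw [(hasDeriv_aux3 y hy').deriv]
      have := Real.log_le_sub_one_of_pos hy'
      linarith
  have h0 := key (by simp [Set.mem_Ico]) (Set.mem_Ico.2 ⟨hu, hu1⟩) hu
  simp at h0
  nlinarith [h0]

private lemma hplus' (μ a : ℝ) (hμ : 0 < μ) (ha : 0 ≤ a) :
    a^2 ≤ (2*μ+a) * ((μ+a) * Real.log (1+a/μ) - a) := by
  have h := h_plus (a/μ) (div_nonneg ha hμ.le)
  have hμ' : μ ≠ 0 := ne_of_gt hμ
  have key := mul_le_mul_of_nonneg_left h (le_of_lt (mul_pos hμ hμ))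
  have e1 : μ*μ * ((a/μ)^2) = a^2 := by field_simp
  have e2 : μ*μ * ((2+a/μ) * ((1+a/μ) * Real.log (1+a/μ) - a/μ))
      = (2*μ+a) * ((μ+a) * Real.log (1+a/μ) - a) := by field_simp
  rw [e1, e2] at key
  exact key

private lemma hminus' (μ a : ℝ) (hμ : 0 < μ) (ha0 : 0 ≤ a) (ha : a < μ) :
    a^2 ≤ 2*μ*((μ - a) * Real.log (1 - a/μ) + a) := by
  have h := h_minus (a/μ) (div_nonneg ha0 hμ.le) ((div_lt_one hμ).2 ha)
  have key := mul_le_mul_of_nonneg_left h (le_of_lt (mul_pos hμ hμ))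
  have e1 : μ*μ * ((a/μ)^2) = a^2 := by field_simp
  have e2 : μ*μ * (2*((1-a/μ) * Real.log (1-a/μ) + a/μ))
      = 2*μ*((μ - a) * Real.log (1 - a/μ) + a) := by field_simp
  rw [e1, e2] at key
  exact key

private lemma chernoff_count {n r : ℕ} (f : Fin n → ℝ) (p : (Fin r → Fin n) → Prop)
    [DecidablePred p] (t lam : ℝ)
    (hp : ∀ R, p R → lam * t ≤ lam * ∑ l, f (R l)) :
    ((Finset.univ.filter p).card : ℝ) ≤
      Real.exp (-(lam * t)) * (∑ v, Real.exp (lam * f v)) ^ r := by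
  have hfac : ∑ R : Fin r → Fin n, Real.exp (lam * ∑ l, f (R l))
      = (∑ v, Real.exp (lam * f v)) ^ r := by
    have he : ∀ R : Fin r → Fin n, Real.exp (lam * ∑ l, f (R l))
        = ∏ l, Real.exp (lam * f (R l)) := by
      intro R; rw [Finset.mul_sum, Real.exp_sum]
    simp_rw [he]
    rw [← Fintype.piFinset_univ]
    rw [← Finset.prod_univ_sum (fun _ : Fin r => (univ : Finset (Fin n)))
      (fun _ v => Real.exp (lam * f v))]
    simp [Finset.prod_const]
  have h1 : ((Finset.univ.filter p).card : ℝ) * Real.exp (lam * t)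
      ≤ ∑ R ∈ Finset.univ.filter p, Real.exp (lam * ∑ l, f (R l)) := by
    have := Finset.card_nsmul_le_sum (Finset.univ.filter p)
      (fun R => Real.exp (lam * ∑ l, f (R l))) (Real.exp (lam * t))
      (fun R hR => Real.exp_le_exp.2 (hp R (Finset.mem_filter.1 hR).2))
    simpa [nsmul_eq_mul] using this
  have h2 : ∑ R ∈ Finset.univ.filter p, Real.exp (lam * ∑ l, f (R l))
      ≤ ∑ R : Fin r → Fin n, Real.exp (lam * ∑ l, f (R l)) :=
    Finset.sum_le_sum_of_subset_of_nonneg (Finset.filter_subset _ _)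
      (fun _ _ _ => (Real.exp_pos _).le)
  have hE : (0:ℝ) < Real.exp (lam * t) := Real.exp_pos _
  rw [← hfac]
  calc ((Finset.univ.filter p).card : ℝ)
      = Real.exp (-(lam*t)) * (((Finset.univ.filter p).card : ℝ) * Real.exp (lam*t)) := by
        rw [← mul_assoc, mul_comm (Real.exp (-(lam*t))), mul_assoc, ← Real.exp_add]
        simp
    _ ≤ Real.exp (-(lam*t)) * ∑ R : Fin r → Fin n, Real.exp (lam * ∑ l, f (R l)) := by
        apply mul_le_mul_of_nonneg_left (h1.trans h2) (Real.exp_pos _).le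

private lemma sum_exp_indicator {n : ℕ} (A : Finset (Fin n)) (lam : ℝ) :
    ∑ v : Fin n, Real.exp (lam * (if v ∈ A then (1:ℝ) else 0))
      = (A.card : ℝ) * Real.exp lam + ((n : ℝ) - A.card) := by
  have he : ∀ v : Fin n, Real.exp (lam * (if v ∈ A then (1:ℝ) else 0))
      = (if v ∈ A then Real.exp lam else 1) := by
    intro v; by_cases h : v ∈ A <;> simp [h]
  simp_rw [he]
  rw [Finset.sum_ite, Finset.sum_const, Finset.sum_const]
  have h1 : Finset.univ.filter (· ∈ A) = A := by
    ext v; simp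
  have h2 : (Finset.univ.filter (· ∉ A)).card = n - A.card := by
    rw [Finset.filter_not, h1]
    simp [Finset.card_sdiff_of_subset (Finset.subset_univ A)]
  rw [h1, h2, nsmul_eq_mul, nsmul_eq_mul]
  have := Finset.card_le_univ A
  push_cast [Nat.cast_sub (by simpa using this)]
  simp


open Classical in
private lemma cover_bound {β : Type*} [Fintype β] (g : β → ℝ) (L U T : ℝ)
    (hL : (((Finset.univ : Finset β).filter fun R => g R < L).card : ℝ) ≤ T)
    (hU : (((Finset.univ : Finset β).filter fun R => U < g R).card : ℝ) ≤ T) :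
    ((Finset.univ : Finset β).card : ℝ) - 2*T ≤
      (((Finset.univ : Finset β).filter fun R => L ≤ g R ∧ g R ≤ U).card : ℝ) := by
  have hsub : (Finset.univ : Finset β) ⊆
      ((Finset.univ.filter fun R => L ≤ g R ∧ g R ≤ U) ∪
        ((Finset.univ.filter fun R => g R < L) ∪ (Finset.univ.filter fun R => U < g R))) := by
    intro R _
    simp only [Finset.mem_union, Finset.mem_filter, Finset.mem_univ, true_and]
    rcases lt_or_ge (g R) L with h | h
    · tauto
    rcases le_or_gt (g R) U with h2 | h2 <;> tauto
  have h1 := Finset.card_le_card hsub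
  have h2 := Finset.card_union_le
    (Finset.univ.filter fun R => L ≤ g R ∧ g R ≤ U)
    ((Finset.univ.filter fun R => g R < L) ∪ (Finset.univ.filter fun R => U < g R))
  have h3 := Finset.card_union_le
    (Finset.univ.filter fun R => g R < L) (Finset.univ.filter fun R => U < g R)
  have h4 : ((Finset.univ : Finset β).card : ℝ) ≤
      ((Finset.univ.filter fun R => L ≤ g R ∧ g R ≤ U).card : ℝ) +
      (((Finset.univ.filter fun R => g R < L).card : ℝ) +
       ((Finset.univ.filter fun R => U < g R).card : ℝ)) := by
    exact_mod_cast le_trans h1 (le_trans h2 (by omega))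
  linarith

set_option maxHeartbeats 2000000 in
open Classical in
/-- Exhaustive-sampling estimation lemma for Max-Cut: for a sample of size
    r ≥ C·n·ln(n)/(α1²·α2·Δ), the sampled estimation ρ_j of ρ̂_j = Σ_{i∈N(j)} x_i
    satisfies (1−α1)ρ̂_j − (1−α1)α2Δ ≤ ρ_j ≤ (1+α1)ρ̂_j + (1+α1)α2Δ
    with probability at least 1 − 2/n³. -/
theorem maxcut_sampling_lemma :
    ∃ C : ℝ, 0 < C ∧
      ∀ (n m : ℕ) (G : SimpleGraph (Fin n)),
        G.edgeFinset.card = m → 1 ≤ m →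
        ∀ (x : Fin n → ℝ), (∀ i, x i = 0 ∨ x i = 1) →
        ∀ (α1 α2 : ℝ), 0 < α1 → α1 < 1 → 0 < α2 →
        ∀ (r : ℕ), 1 ≤ r →
          C * n * Real.log n / (α1 ^ 2 * α2 * (2 * m / n)) ≤ (r : ℝ) →
        ∀ (j : Fin n),
          (1 : ℝ) - 2 / (n : ℝ) ^ 3 ≤
            ((Finset.univ.filter fun R : Fin r → Fin n =>
                (1 - α1) * (∑ i ∈ G.neighborFinset j, x i)
                    - (1 - α1) * α2 * (2 * m / n) ≤
                  ((n : ℝ) / r) * ∑ l, (if R l ∈ G.neighborFinset j then x (R l) else 0) ∧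
                ((n : ℝ) / r) * ∑ l, (if R l ∈ G.neighborFinset j then x (R l) else 0) ≤
                  (1 + α1) * (∑ i ∈ G.neighborFinset j, x i)
                    + (1 + α1) * α2 * (2 * m / n)).card : ℝ) / (n : ℝ) ^ r := by
  refine ⟨6, by norm_num, ?_⟩
  intro n m G hGm hm x hx α1 α2 hα1 hα1' hα2 r hr hrC j
  -- n ≥ 2
  have hn2 : 2 ≤ n := by
    have hpos : 0 < G.edgeFinset.card := by omega
    obtain ⟨e, he⟩ := Finset.card_pos.mp hpos
    rw [SimpleGraph.mem_edgeFinset] at he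
    revert he
    refine Sym2.ind (fun u v he => ?_) e
    have hadj : G.Adj u v := G.mem_edgeSet.mp he
    have hne : u ≠ v := G.ne_of_adj hadj
    have hnt : Nontrivial (Fin n) := ⟨⟨u, v, hne⟩⟩
    have := Fintype.one_lt_card_iff_nontrivial.mpr hnt
    exact (by simpa using this : 1 < n)
  have hn0 : (0:ℝ) < n := by exact_mod_cast (by omega : 0 < n)
  have hr0 : (0:ℝ) < r := by exact_mod_cast (by omega : 0 < r)
  have hm0 : (0:ℝ) < m := by exact_mod_cast (by omega : 0 < m)
  set Δ : ℝ := 2 * m / n with hΔdef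
  have hΔ : 0 < Δ := div_pos (by linarith) hn0
  clear_value Δ
  set N := G.neighborFinset j with hNdef
  set A := N.filter (fun v => x v = 1) with hAdef
  set k := A.card with hkdef
  have hkn : (k:ℝ) ≤ n := by exact_mod_cast (Finset.card_le_univ A).trans_eq (by simp)
  have hsum : ∑ i ∈ N, x i = (k:ℝ) := by
    have h1 : ∑ i ∈ N, x i = ∑ i ∈ N, (if x i = 1 then (1:ℝ) else 0) := by
      refine Finset.sum_congr rfl (fun i _ => ?_)
      rcases hx i with h | h <;> simp [h]
    rw [h1, Finset.sum_boole, hkdef, hAdef]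
  have hS : ∀ v : Fin n, (if v ∈ N then x v else 0) = (if v ∈ A then (1:ℝ) else 0) := by
    intro v
    by_cases hv : v ∈ N
    · rcases hx v with h | h
      · have hvA : v ∉ A := by simp [hAdef, Finset.mem_filter, h]
        simp [hv, hvA, h]
      · have hvA : v ∈ A := by simp [hAdef, Finset.mem_filter, hv, h]
        simp [hv, hvA, h]
    · have hvA : v ∉ A := by simp [hAdef, Finset.mem_filter, hv]
      simp [hv, hvA]
  clear_value N A k
  set c : ℝ := r * (α2 * Δ) / n with hcdef
  have hc : 0 < c := div_pos (mul_pos hr0 (mul_pos hα2 hΔ)) hn0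
  clear_value c
  have hεc : 6 * Real.log n ≤ α1^2 * c := by
    have hD : 0 < α1^2 * α2 * Δ := by positivity
    have h := (div_le_iff₀ hD).mp hrC
    have e : α1^2 * c = (r * (α1^2 * α2 * Δ)) / n := by rw [hcdef]; ring
    rw [e, le_div_iff₀ hn0]
    nlinarith [h]
  have hlogn : 0 ≤ Real.log n := Real.log_nonneg (by exact_mod_cast (by omega : 1 ≤ n))
  have hexp3 : Real.exp (-(3 * Real.log n)) = 1 / (n:ℝ)^3 := by
    rw [show (3:ℝ) * Real.log n = Real.log ((n:ℝ)^3) by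
        rw [Real.log_pow]; push_cast; ring,
      ← Real.log_inv, Real.exp_log (by positivity)]
    rw [one_div]
  -- upper tail bound
  have hU : (((Finset.univ : Finset (Fin r → Fin n)).filter fun R =>
      (1 + α1) * (∑ i ∈ N, x i) + (1 + α1) * α2 * Δ <
        ((n : ℝ) / r) * ∑ l, (if R l ∈ N then x (R l) else 0)).card : ℝ)
      ≤ (n:ℝ)^r / (n:ℝ)^3 := by
    by_cases hk0 : k = 0
    · have hempty : ((Finset.univ : Finset (Fin r → Fin n)).filter fun R =>
          (1 + α1) * (∑ i ∈ N, x i) + (1 + α1) * α2 * Δ <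
            ((n : ℝ) / r) * ∑ l, (if R l ∈ N then x (R l) else 0)) = ∅ := by
        rw [Finset.filter_eq_empty_iff]
        intro R _
        have hA : A = ∅ := Finset.card_eq_zero.mp (hkdef ▸ hk0)
        have hSR : (∑ l, (if R l ∈ N then x (R l) else 0)) = 0 := by
          refine Finset.sum_eq_zero (fun l _ => ?_)
          rw [hS (R l), hA]
          simp
        rw [not_lt, hSR, hsum, hk0]
        push_cast
        nlinarith [mul_pos (mul_pos (show (0:ℝ) < 1 + α1 by linarith) hα2) hΔ]
      rw [hempty]
      simp
      positivity
    · have hkpos : 0 < (k:ℝ) := by exact_mod_cast Nat.pos_of_ne_zero hk0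
      set μ : ℝ := r * k / n with hμdef
      have hμ : 0 < μ := div_pos (mul_pos hr0 hkpos) hn0
      set a : ℝ := α1 * μ + c with hadef
      have ha : 0 < a := by nlinarith [mul_pos hα1 hμ]
      have hfrac : (0:ℝ) < 1 + a/μ := by positivity
      set lam : ℝ := Real.log (1 + a/μ) with hlamdef
      have hlam : 0 ≤ lam := Real.log_nonneg (by nlinarith [div_pos ha hμ])
      clear_value μ a lam
      have hsubU : ((Finset.univ : Finset (Fin r → Fin n)).filter fun R =>
          (1 + α1) * (∑ i ∈ N, x i) + (1 + α1) * α2 * Δ <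
            ((n : ℝ) / r) * ∑ l, (if R l ∈ N then x (R l) else 0)) ⊆
          ((Finset.univ : Finset (Fin r → Fin n)).filter fun R =>
            μ + a ≤ ∑ l, (if R l ∈ A then (1:ℝ) else 0)) := by
        intro R hR
        rw [Finset.mem_filter] at hR ⊢
        refine ⟨Finset.mem_univ _, ?_⟩
        obtain ⟨-, h⟩ := hR
        rw [hsum] at h
        have hSind : ∑ l, (if R l ∈ N then x (R l) else 0)
            = ∑ l, (if R l ∈ A then (1:ℝ) else 0) :=
          Finset.sum_congr rfl (fun l _ => hS (R l))
        rw [hSind] at h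
        have h2 := mul_lt_mul_of_pos_left h (div_pos hr0 hn0)
        have e1 : (r:ℝ)/n * (((n:ℝ)/r) * ∑ l, (if R l ∈ A then (1:ℝ) else 0))
            = ∑ l, (if R l ∈ A then (1:ℝ) else 0) := by
          field_simp
        have e2 : (r:ℝ)/n * ((1 + α1) * (k:ℝ) + (1 + α1) * α2 * Δ)
            = (1 + α1) * μ + (1 + α1) * c := by
          rw [hμdef, hcdef]
          field_simp
        rw [e1, e2] at h2
        have hac : 0 ≤ α1 * c := (mul_pos hα1 hc).le
        rw [hadef]
        linarith
      have hcc := chernoff_count (fun v => if v ∈ A then (1:ℝ) else 0)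
        (fun R : Fin r → Fin n => μ + a ≤ ∑ l, (if R l ∈ A then (1:ℝ) else 0)) (μ + a) lam
        (fun R hR => mul_le_mul_of_nonneg_left hR hlam)
      rw [sum_exp_indicator, ← hkdef] at hcc
      have hexpl : Real.exp lam = 1 + a/μ := by rw [hlamdef]; exact Real.exp_log hfrac
      have hval : (k:ℝ) * Real.exp lam + ((n:ℝ) - k) = (n:ℝ) * (1 + a/r) := by
        rw [hexpl, hμdef]
        field_simp
        ring
      rw [hval] at hcc
      have hbase : (0:ℝ) ≤ 1 + a/r := by positivity
      have hpow : ((n:ℝ) * (1 + a/r))^r ≤ (n:ℝ)^r * Real.exp a := by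
        rw [mul_pow]
        refine mul_le_mul_of_nonneg_left ?_ (by positivity)
        have h1 : 1 + a/r ≤ Real.exp (a/r) := by linarith [Real.add_one_le_exp (a/r)]
        calc (1 + a/r)^r ≤ (Real.exp (a/r))^r := pow_le_pow_left₀ hbase h1 r
          _ = Real.exp a := by
            rw [← Real.exp_nat_mul]
            congr 1
            field_simp
      have hkey := hplus' μ a hμ ha.le
      rw [← hlamdef] at hkey
      have halg : α1^2 * c * (2*μ + a) ≤ 2 * a^2 := by
        rw [hadef]
        nlinarith [mul_nonneg (mul_nonneg (mul_nonneg hα1.le hμ.le) hc.le)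
            (show (0:ℝ) ≤ 1 - α1 by linarith),
          mul_nonneg (mul_nonneg hα1.le hμ.le) hc.le, sq_nonneg c, sq_nonneg (α1*μ),
          mul_nonneg (sq_nonneg c) (show (0:ℝ) ≤ 1 - α1^2 by nlinarith),
          mul_nonneg (mul_nonneg (mul_nonneg (mul_nonneg hα1.le hα1.le) hμ.le) hc.le)
            (show (0:ℝ) ≤ 1 - α1 by linarith)]
      have h2μa : (0:ℝ) < 2*μ + a := by linarith
      have h6 := mul_le_mul_of_nonneg_right hεc h2μa.le
      have hXge : 3 * Real.log n ≤ (μ + a) * lam - a := by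
        nlinarith [hkey, h6, halg, h2μa]
      calc (((Finset.univ : Finset (Fin r → Fin n)).filter fun R =>
          (1 + α1) * (∑ i ∈ N, x i) + (1 + α1) * α2 * Δ <
            ((n : ℝ) / r) * ∑ l, (if R l ∈ N then x (R l) else 0)).card : ℝ)
          ≤ (((Finset.univ : Finset (Fin r → Fin n)).filter fun R =>
              μ + a ≤ ∑ l, (if R l ∈ A then (1:ℝ) else 0)).card : ℝ) := by
            exact_mod_cast Finset.card_le_card hsubU
        _ ≤ Real.exp (-(lam * (μ + a))) * ((n:ℝ) * (1 + a/r))^r := hcc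
        _ ≤ Real.exp (-(lam * (μ + a))) * ((n:ℝ)^r * Real.exp a) :=
            mul_le_mul_of_nonneg_left hpow (Real.exp_pos _).le
        _ = (n:ℝ)^r * (Real.exp (-(lam * (μ + a))) * Real.exp a) := by ring
        _ = (n:ℝ)^r * Real.exp (-(lam * (μ + a)) + a) := by rw [Real.exp_add]
        _ = (n:ℝ)^r * Real.exp (a - lam * (μ + a)) := by rw [neg_add_eq_sub]
        _ ≤ (n:ℝ)^r * Real.exp (-(3 * Real.log n)) := by
            refine mul_le_mul_of_nonneg_left (Real.exp_le_exp.mpr (by linarith)) (by positivity)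
        _ = (n:ℝ)^r / (n:ℝ)^3 := by
            rw [hexp3]
            ring
  -- lower tail bound
  have hL : (((Finset.univ : Finset (Fin r → Fin n)).filter fun R =>
      ((n : ℝ) / r) * ∑ l, (if R l ∈ N then x (R l) else 0) <
        (1 - α1) * (∑ i ∈ N, x i) - (1 - α1) * α2 * Δ).card : ℝ)
      ≤ (n:ℝ)^r / (n:ℝ)^3 := by
    by_cases hkB : (k:ℝ) ≤ α2 * Δ
    · have hempty : ((Finset.univ : Finset (Fin r → Fin n)).filter fun R =>
          ((n : ℝ) / r) * ∑ l, (if R l ∈ N then x (R l) else 0) <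
            (1 - α1) * (∑ i ∈ N, x i) - (1 - α1) * α2 * Δ) = ∅ := by
        rw [Finset.filter_eq_empty_iff]
        intro R _
        rw [not_lt, hsum]
        have hSR : (0:ℝ) ≤ ∑ l, (if R l ∈ N then x (R l) else 0) := by
          refine Finset.sum_nonneg (fun l _ => ?_)
          rcases hx (R l) with h | h <;> by_cases hl : R l ∈ N <;> simp [h, hl]
        have h1a : (0:ℝ) ≤ 1 - α1 := by linarith
        have h2a : (1 - α1) * (k:ℝ) - (1 - α1) * α2 * Δ ≤ 0 := by nlinarith
        have h3a : (0:ℝ) ≤ ((n : ℝ) / r) * ∑ l, (if R l ∈ N then x (R l) else 0) :=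
          mul_nonneg (by positivity) hSR
        linarith
      rw [hempty]
      simp
      positivity
    · push_neg at hkB
      have hkpos : 0 < (k:ℝ) := lt_trans (mul_pos hα2 hΔ) hkB
      set μ : ℝ := r * k / n with hμdef
      have hμ : 0 < μ := div_pos (mul_pos hr0 hkpos) hn0
      have hcμ : c < μ := by
        rw [hμdef, hcdef]
        rw [div_lt_div_iff₀ hn0 hn0]
        nlinarith [mul_lt_mul_of_pos_left hkB hr0]
      set a : ℝ := α1 * μ + (1 - α1) * c with hadef
      have ha : 0 < a := by nlinarith [mul_pos hα1 hμ, mul_pos hα2 hΔ]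
      have haμ : a < μ := by nlinarith
      have hfrac : (0:ℝ) < 1 - a/μ := by
        rw [sub_pos]
        exact (div_lt_one hμ).mpr haμ
      set lam : ℝ := Real.log (1 - a/μ) with hlamdef
      have hlam : lam ≤ 0 := Real.log_nonpos hfrac.le (by
        have := div_pos ha hμ
        linarith)
      clear_value μ a lam
      have hsubL : ((Finset.univ : Finset (Fin r → Fin n)).filter fun R =>
          ((n : ℝ) / r) * ∑ l, (if R l ∈ N then x (R l) else 0) <
            (1 - α1) * (∑ i ∈ N, x i) - (1 - α1) * α2 * Δ) ⊆
          ((Finset.univ : Finset (Fin r → Fin n)).filter fun R =>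
            (∑ l, (if R l ∈ A then (1:ℝ) else 0)) ≤ μ - a) := by
        intro R hR
        rw [Finset.mem_filter] at hR ⊢
        refine ⟨Finset.mem_univ _, ?_⟩
        obtain ⟨-, h⟩ := hR
        rw [hsum] at h
        have hSind : ∑ l, (if R l ∈ N then x (R l) else 0)
            = ∑ l, (if R l ∈ A then (1:ℝ) else 0) :=
          Finset.sum_congr rfl (fun l _ => hS (R l))
        rw [hSind] at h
        have h2 := mul_lt_mul_of_pos_left h (div_pos hr0 hn0)
        have e1 : (r:ℝ)/n * (((n:ℝ)/r) * ∑ l, (if R l ∈ A then (1:ℝ) else 0))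
            = ∑ l, (if R l ∈ A then (1:ℝ) else 0) := by
          field_simp
        have e2 : (r:ℝ)/n * ((1 - α1) * (k:ℝ) - (1 - α1) * α2 * Δ)
            = μ - a := by
          rw [hadef, hμdef, hcdef]
          field_simp
          ring
        rw [e1, e2] at h2
        linarith
      have hcc := chernoff_count (fun v => if v ∈ A then (1:ℝ) else 0)
        (fun R : Fin r → Fin n => (∑ l, (if R l ∈ A then (1:ℝ) else 0)) ≤ μ - a) (μ - a) lam
        (fun R hR => mul_le_mul_of_nonpos_left hR hlam)
      rw [sum_exp_indicator, ← hkdef] at hcc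
      have hexpl : Real.exp lam = 1 - a/μ := by rw [hlamdef]; exact Real.exp_log hfrac
      have hval : (k:ℝ) * Real.exp lam + ((n:ℝ) - k) = (n:ℝ) * (1 - a/r) := by
        rw [hexpl, hμdef]
        field_simp
        ring
      rw [hval] at hcc
      have hμr : μ ≤ (r:ℝ) := by
        rw [hμdef, div_le_iff₀ hn0]
        nlinarith
      have hbase : (0:ℝ) ≤ 1 - a/r := by
        rw [sub_nonneg]
        rw [div_le_one hr0]
        linarith
      have hpow : ((n:ℝ) * (1 - a/r))^r ≤ (n:ℝ)^r * Real.exp (-a) := by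
        rw [mul_pow]
        refine mul_le_mul_of_nonneg_left ?_ (by positivity)
        have h1 : 1 - a/r ≤ Real.exp (-(a/r)) := by linarith [Real.add_one_le_exp (-(a/r))]
        calc (1 - a/r)^r ≤ (Real.exp (-(a/r)))^r := pow_le_pow_left₀ hbase h1 r
          _ = Real.exp (-a) := by
            rw [← Real.exp_nat_mul]
            congr 1
            rw [mul_neg, mul_comm, div_mul_cancel₀ a hr0.ne']
      have hkey := hminus' μ a hμ ha.le haμ
      rw [← hlamdef] at hkey
      have hXge : 3 * Real.log n ≤ (μ - a) * lam + a := by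
        have haa : α1 * μ ≤ a := by nlinarith [mul_nonneg (show (0:ℝ) ≤ 1 - α1 by linarith) hc.le]
        have hsq : α1^2 * c * (2*μ) ≤ 2 * a^2 := by
          have t1 : α1^2 * c * (2*μ) ≤ α1^2 * μ * (2*μ) :=
            mul_le_mul_of_nonneg_right (mul_le_mul_of_nonneg_left hcμ.le (sq_nonneg α1))
              (by linarith : (0:ℝ) ≤ 2*μ)
          have t2 : (α1*μ) * (α1*μ) ≤ a * a :=
            mul_le_mul haa haa (mul_nonneg hα1.le hμ.le) ha.le
          nlinarith [t1, t2]
        have h6 := mul_le_mul_of_nonneg_right hεc (by linarith : (0:ℝ) ≤ 2*μ)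
        nlinarith [hkey, hμ]
      calc (((Finset.univ : Finset (Fin r → Fin n)).filter fun R =>
          ((n : ℝ) / r) * ∑ l, (if R l ∈ N then x (R l) else 0) <
            (1 - α1) * (∑ i ∈ N, x i) - (1 - α1) * α2 * Δ).card : ℝ)
          ≤ (((Finset.univ : Finset (Fin r → Fin n)).filter fun R =>
              (∑ l, (if R l ∈ A then (1:ℝ) else 0)) ≤ μ - a).card : ℝ) := by
            exact_mod_cast Finset.card_le_card hsubL
        _ ≤ Real.exp (-(lam * (μ - a))) * ((n:ℝ) * (1 - a/r))^r := hcc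
        _ ≤ Real.exp (-(lam * (μ - a))) * ((n:ℝ)^r * Real.exp (-a)) :=
            mul_le_mul_of_nonneg_left hpow (Real.exp_pos _).le
        _ = (n:ℝ)^r * (Real.exp (-(lam * (μ - a))) * Real.exp (-a)) := by ring
        _ = (n:ℝ)^r * Real.exp (-(lam * (μ - a)) + -a) := by rw [Real.exp_add]
        _ ≤ (n:ℝ)^r * Real.exp (-(3 * Real.log n)) := by
            refine mul_le_mul_of_nonneg_left (Real.exp_le_exp.mpr (by nlinarith [hXge])) (by positivity)
        _ = (n:ℝ)^r / (n:ℝ)^3 := by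
            rw [hexp3]
            ring
  have hcov := cover_bound
    (fun R : Fin r → Fin n => ((n : ℝ) / r) * ∑ l, (if R l ∈ N then x (R l) else 0))
    ((1 - α1) * (∑ i ∈ N, x i) - (1 - α1) * α2 * Δ)
    ((1 + α1) * (∑ i ∈ N, x i) + (1 + α1) * α2 * Δ)
    ((n:ℝ)^r / (n:ℝ)^3) hL hU
  have hcard : ((Finset.univ : Finset (Fin r → Fin n)).card : ℝ) = (n:ℝ)^r := by
    rw [Finset.card_univ, Fintype.card_fun]
    push_cast
    simp
  rw [hcard] at hcov
  have hnr : (0:ℝ) < (n:ℝ)^r := by positivity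
  rw [le_div_iff₀ hnr]
  have e : (1 - 2/(n:ℝ)^3) * (n:ℝ)^r = (n:ℝ)^r - 2*((n:ℝ)^r/(n:ℝ)^3) := by ring
  rw [e]
  exact hcov
end

section
/- Let G be a graph with vertex set {1,…,n} and m edges, let ε1, ε2 > 0, and let Δ = 2m/n. Let ρ_1,…,ρ_n be reals with 0 ≤ ρ_j ≤ deg(j) for every j, and let y ∈ [0,1]^n satisfy, for every vertex j, (1−ε1)·ρ_j − ε2·Δ ≤ Σ_{i∈N(j)} y_i ≤ (1+ε1)·ρ_j + ε2·Δ. Define p(y) = Σ_{j=1}^n y_j·(deg(j) − Σ_{i∈N(j)} y_i). Then |p(y) − Σ_{j=1}^n y_j·(deg(j) − ρ_j)| ≤ 2(ε1 + ε2)·m. -/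
open Classical in
/-- The cut value p(y) of any feasible solution y of (LP) is within
    2(ε1+ε2)m of its LP objective value Σ_j y_j(deg(j) − ρ_j). -/
theorem maxcut_lp_value (n m : ℕ) (G : SimpleGraph (Fin n)) (hm : G.edgeFinset.card = m)
    (ε1 ε2 : ℝ) (hε1 : 0 < ε1) (hε2 : 0 < ε2)
    (ρ : Fin n → ℝ) (hρ : ∀ j, 0 ≤ ρ j ∧ ρ j ≤ (G.degree j : ℝ))
    (y : Fin n → ℝ) (hy : ∀ j, 0 ≤ y j ∧ y j ≤ 1)
    (hcon : ∀ j,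
      (1 - ε1) * ρ j - ε2 * (2 * m / n) ≤ ∑ i ∈ G.neighborFinset j, y i ∧
      ∑ i ∈ G.neighborFinset j, y i ≤ (1 + ε1) * ρ j + ε2 * (2 * m / n)) :
    |(∑ j, y j * ((G.degree j : ℝ) - ∑ i ∈ G.neighborFinset j, y i)) -
      ∑ j, y j * ((G.degree j : ℝ) - ρ j)| ≤ 2 * (ε1 + ε2) * m := by
  have hdeg : (∑ j, (G.degree j : ℝ)) = 2 * m := by
    have := G.sum_degrees_eq_twice_card_edges
    rw [hm] at this
    exact_mod_cast this
  have key : (∑ j, y j * ((G.degree j : ℝ) - ∑ i ∈ G.neighborFinset j, y i)) -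
      ∑ j, y j * ((G.degree j : ℝ) - ρ j) =
      ∑ j, y j * (ρ j - ∑ i ∈ G.neighborFinset j, y i) := by
    rw [← Finset.sum_sub_distrib]
    exact Finset.sum_congr rfl fun j _ => by ring
  rw [key]
  have h1 : |∑ j, y j * (ρ j - ∑ i ∈ G.neighborFinset j, y i)| ≤
      ∑ j, (ε1 * ρ j + ε2 * (2 * m / n)) := by
    refine (Finset.abs_sum_le_sum_abs _ _).trans (Finset.sum_le_sum fun j _ => ?_)
    have hcj := hcon j
    have hyj := hy j
    have hρj := hρ j
    have habs : |ρ j - ∑ i ∈ G.neighborFinset j, y i| ≤ ε1 * ρ j + ε2 * (2 * m / n) := by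
      rw [abs_le]; constructor <;> [linarith [hcj.2]; linarith [hcj.1]]
    calc |y j * (ρ j - ∑ i ∈ G.neighborFinset j, y i)|
        = |y j| * |ρ j - ∑ i ∈ G.neighborFinset j, y i| := abs_mul _ _
      _ ≤ 1 * (ε1 * ρ j + ε2 * (2 * m / n)) := by
          apply mul_le_mul _ habs (abs_nonneg _) zero_le_one
          rw [abs_of_nonneg hyj.1]; exact hyj.2
      _ = ε1 * ρ j + ε2 * (2 * m / n) := one_mul _
  refine h1.trans ?_
  rw [Finset.sum_add_distrib, ← Finset.mul_sum, Finset.sum_const, nsmul_eq_mul,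
    Finset.card_univ, Fintype.card_fin]
  have hρsum : (∑ j, ρ j) ≤ 2 * m := by
    calc (∑ j, ρ j) ≤ ∑ j, (G.degree j : ℝ) := Finset.sum_le_sum fun j _ => (hρ j).2
      _ = 2 * m := hdeg
  have h2 : (n : ℝ) * (ε2 * (2 * m / n)) ≤ 2 * ε2 * m := by
    rcases Nat.eq_zero_or_pos n with h | h
    · have : m = 0 := by
        subst h; rw [← hm, Finset.card_eq_zero]; exact Finset.eq_empty_of_isEmpty _
      simp [this]
    · have hn : (n : ℝ) ≠ 0 := Nat.cast_ne_zero.mpr h.ne'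
      rw [show (n : ℝ) * (ε2 * (2 * ↑m / ↑n)) = ε2 * (2 * m) * ((n:ℝ)/n) by ring,
        div_self hn]
      exact le_of_eq (by ring)
  have := mul_le_mul_of_nonneg_left hρsum hε1.le
  nlinarith [h2]
end

section
/- Let G be a graph with vertex set {1,…,n} and m edges, let ε1, ε2 > 0, Δ = 2m/n, and assume 8·n·ln(n) ≤ ε1²·m and ε2·m ≥ 1. Let ρ_1,…,ρ_n be reals with 0 ≤ ρ_j ≤ deg(j) for every j. Suppose z ∈ {0,1}^n satisfies, for every vertex j, (1−ε1)·ρ_j − ε2·Δ − 2√(deg(j)·ln n) ≤ Σ_{i∈N(j)} z_i ≤ (1+ε1)·ρ_j + ε2·Δ + 2√(deg(j)·ln n), and y ∈ [0,1]^n satisfies |Σ_j z_j·(deg(j) − ρ_j) − Σ_j y_j·(deg(j) − ρ_j)| ≤ 1. Define p(z) = Σ_{j=1}^n z_j·(deg(j) − Σ_{i∈N(j)} z_i). Then |p(z) − Σ_{j=1}^n y_j·(deg(j) − ρ_j)| ≤ 3(ε1 + ε2)·m. -/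
open Classical in
/-- The cut value p(z) of the rounded solution z is within 3(ε1+ε2)m of the
    LP objective value of the fractional solution y. -/
theorem maxcut_rounded_value (n m : ℕ) (G : SimpleGraph (Fin n)) (hm : G.edgeFinset.card = m)
    (ε1 ε2 : ℝ) (hε1 : 0 < ε1) (hε2 : 0 < ε2)
    (hlog : 8 * n * Real.log n ≤ ε1 ^ 2 * m) (hε2m : 1 ≤ ε2 * m)
    (ρ : Fin n → ℝ) (hρ : ∀ j, 0 ≤ ρ j ∧ ρ j ≤ (G.degree j : ℝ))
    (z : Fin n → ℝ) (hz01 : ∀ j, z j = 0 ∨ z j = 1)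
    (hzcon : ∀ j,
      (1 - ε1) * ρ j - ε2 * (2 * m / n)
          - 2 * Real.sqrt ((G.degree j : ℝ) * Real.log n) ≤
        ∑ i ∈ G.neighborFinset j, z i ∧
      ∑ i ∈ G.neighborFinset j, z i ≤
        (1 + ε1) * ρ j + ε2 * (2 * m / n)
          + 2 * Real.sqrt ((G.degree j : ℝ) * Real.log n))
    (y : Fin n → ℝ) (hy : ∀ j, 0 ≤ y j ∧ y j ≤ 1)
    (hclose : |(∑ j, z j * ((G.degree j : ℝ) - ρ j)) -
        ∑ j, y j * ((G.degree j : ℝ) - ρ j)| ≤ 1) :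
    |(∑ j, z j * ((G.degree j : ℝ) - ∑ i ∈ G.neighborFinset j, z i)) -
      ∑ j, y j * ((G.degree j : ℝ) - ρ j)| ≤ 3 * (ε1 + ε2) * m := by
  -- basic facts
  have hmpos : 0 < m := by
    rcases Nat.eq_zero_or_pos m with h | h
    · exfalso; rw [h] at hε2m; simp at hε2m; linarith
    · exact h
  have hnpos : 0 < n := by
    rcases Nat.eq_zero_or_pos n with h | h
    · exfalso; subst h
      have : G.edgeFinset = ∅ := by
        apply Finset.eq_empty_of_forall_notMem
        intro e he
        exact Fin.elim0 e.out.1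
      rw [this] at hm; simp at hm; omega
    · exact h
  have hmR : (1:ℝ) ≤ (m:ℝ) := by exact_mod_cast hmpos
  have hnR : (1:ℝ) ≤ (n:ℝ) := by exact_mod_cast hnpos
  have hlogn : 0 ≤ Real.log n := Real.log_nonneg hnR
  have hdegsum : (∑ j, (G.degree j : ℝ)) = 2 * m := by
    have h := G.sum_degrees_eq_twice_card_edges
    rw [hm] at h
    exact_mod_cast h
  set Δ : ℝ := ε2 * (2 * m / n) with hΔ
  have hΔnn : 0 ≤ Δ := by
    apply mul_nonneg hε2.le
    positivity
  set B : Fin n → ℝ := fun j =>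
    ε1 * ρ j + Δ + 2 * Real.sqrt ((G.degree j : ℝ) * Real.log n) with hB
  have hBnn : ∀ j, 0 ≤ B j := by
    intro j
    have := (hρ j).1
    have : 0 ≤ ε1 * ρ j := mul_nonneg hε1.le (hρ j).1
    positivity
  have hterm : ∀ j, |z j * (ρ j - ∑ i ∈ G.neighborFinset j, z i)| ≤ B j := by
    intro j
    rcases hz01 j with h | h
    · rw [h]; simpa using hBnn j
    · rw [h, one_mul, abs_le]
      obtain ⟨h1, h2⟩ := hzcon j
      constructor
      · simp only [hB]; nlinarith [h2]
      · simp only [hB]; nlinarith [h1]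
  -- bound the sum of B
  have hsumρ : ∑ j, ρ j ≤ 2 * m := by
    rw [← hdegsum]; exact Finset.sum_le_sum fun j _ => (hρ j).2
  have hsqrtCS : ∑ j, Real.sqrt ((G.degree j : ℝ) * Real.log n) ≤ ε1 * m / 2 := by
    have hCS : (∑ j, Real.sqrt ((G.degree j : ℝ) * Real.log n)) ^ 2 ≤
        (n : ℝ) * ∑ j, (G.degree j : ℝ) * Real.log n := by
      have := sq_sum_le_card_mul_sum_sq (s := (Finset.univ : Finset (Fin n)))
        (f := fun j => Real.sqrt ((G.degree j : ℝ) * Real.log n))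
      have h2 : ∑ j : Fin n, (Real.sqrt ((G.degree j : ℝ) * Real.log n)) ^ 2
          = ∑ j, (G.degree j : ℝ) * Real.log n :=
        Finset.sum_congr rfl fun j _ => Real.sq_sqrt (by positivity)
      rw [Finset.card_univ, Fintype.card_fin, h2] at this
      exact this
    have hsum : (∑ j, (G.degree j : ℝ) * Real.log n) = 2 * m * Real.log n := by
      rw [← Finset.sum_mul, hdegsum]
    have hkey : (∑ j, Real.sqrt ((G.degree j : ℝ) * Real.log n)) ^ 2 ≤ (ε1 * m / 2) ^ 2 := by
      rw [hsum] at hCS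
      have h1 : (n : ℝ) * (2 * m * Real.log n) ≤ (ε1 * m / 2) ^ 2 := by
        have : 8 * (n : ℝ) * Real.log n ≤ ε1 ^ 2 * m := hlog
        nlinarith [hmR, mul_nonneg (Nat.cast_nonneg n) hlogn]
      linarith
    have hnn : 0 ≤ ∑ j, Real.sqrt ((G.degree j : ℝ) * Real.log n) :=
      Finset.sum_nonneg fun j _ => Real.sqrt_nonneg _
    have hb : (0:ℝ) ≤ ε1 * m / 2 := by positivity
    nlinarith [hkey, hnn, hb]
  have hsumB : ∑ j, B j ≤ 3 * ε1 * m + 2 * ε2 * m := by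
    have : ∑ j, B j = ε1 * (∑ j, ρ j) + (n : ℝ) * Δ
        + 2 * ∑ j, Real.sqrt ((G.degree j : ℝ) * Real.log n) := by
      simp [hB, Finset.sum_add_distrib, Finset.mul_sum, Finset.sum_mul, mul_comm]
    rw [this]
    have hΔval : (n : ℝ) * Δ = 2 * ε2 * m := by
      rw [hΔ]; field_simp
    rw [hΔval]
    have h1 : ε1 * (∑ j, ρ j) ≤ ε1 * (2 * m) :=
      mul_le_mul_of_nonneg_left hsumρ hε1.le
    linarith
  -- main triangle inequality
  have hdiff : |(∑ j, z j * ((G.degree j : ℝ) - ∑ i ∈ G.neighborFinset j, z i)) -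
      ∑ j, z j * ((G.degree j : ℝ) - ρ j)| ≤ ∑ j, B j := by
    have heq : (∑ j, z j * ((G.degree j : ℝ) - ∑ i ∈ G.neighborFinset j, z i)) -
        ∑ j, z j * ((G.degree j : ℝ) - ρ j)
        = ∑ j, z j * (ρ j - ∑ i ∈ G.neighborFinset j, z i) := by
      rw [← Finset.sum_sub_distrib]
      congr 1; funext j; ring
    rw [heq]
    calc |∑ j, z j * (ρ j - ∑ i ∈ G.neighborFinset j, z i)|
        ≤ ∑ j, |z j * (ρ j - ∑ i ∈ G.neighborFinset j, z i)| :=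
          Finset.abs_sum_le_sum_abs _ _
      _ ≤ ∑ j, B j := Finset.sum_le_sum fun j _ => hterm j
  calc |(∑ j, z j * ((G.degree j : ℝ) - ∑ i ∈ G.neighborFinset j, z i)) -
      ∑ j, y j * ((G.degree j : ℝ) - ρ j)|
      ≤ |(∑ j, z j * ((G.degree j : ℝ) - ∑ i ∈ G.neighborFinset j, z i)) -
          ∑ j, z j * ((G.degree j : ℝ) - ρ j)|
        + |(∑ j, z j * ((G.degree j : ℝ) - ρ j)) -
          ∑ j, y j * ((G.degree j : ℝ) - ρ j)| := abs_sub_le _ _ _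
    _ ≤ (3 * ε1 * m + 2 * ε2 * m) + 1 := add_le_add (hdiff.trans hsumB) hclose
    _ ≤ 3 * (ε1 + ε2) * m := by linarith
end

section
/- Let n ≥ 2 be an integer, δ ∈ (0,1], let d ≥ 1 and q ≥ 0 be integers, β ≥ 1, α1 ∈ (0,1) and α2 > 0. Let x ∈ {0,1}^n and let ρ_1,…,ρ_n be reals with 0 ≤ ρ_j ≤ (q+1)·β·n^q for every j. Let γ ≥ 3(d+1)(q+1)β/(α1²·α2), let r = ⌈γ·n^{1−δ}·ln n⌉, and let R_1,…,R_r be drawn independently and uniformly at random (with replacement) from {1,…,n}. Set ρ = (n/r)·Σ_{l=1}^r ρ_{R_l}·x_{R_l} and ρ̂ = Σ_{j=1}^n ρ_j·x_j. Then with probability at least 1 − 2/n^{d+1}: (1−α1)·ρ̂ − (1−α1)·α2·n^{q+δ} ≤ ρ ≤ (1+α1)·ρ̂ + (1+α1)·α2·n^{q+δ}. -/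
open Real Finset

lemma exp_mul_le_convex {t a c : ℝ} (hc : 0 < c) (h0 : 0 ≤ a) (h1 : a ≤ c) :
    Real.exp (t * a) ≤ 1 + (a / c) * (Real.exp (t * c) - 1) := by
  have hθ0 : 0 ≤ a / c := div_nonneg h0 hc.le
  have hθ1 : a / c ≤ 1 := (div_le_one hc).2 h1
  have key := convexOn_exp.2 (Set.mem_univ 0) (Set.mem_univ (t * c))
      (by linarith : (0:ℝ) ≤ 1 - a / c) hθ0 (by ring)
  have h2 : (1 - a / c) • (0:ℝ) + (a / c) • (t * c) = t * a := by
    rw [smul_eq_mul, smul_eq_mul, mul_zero, zero_add, div_mul_eq_mul_div, mul_div_assoc,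
      mul_div_cancel_right₀ _ hc.ne', mul_comm]
  rw [h2] at key
  rw [smul_eq_mul, smul_eq_mul, Real.exp_zero] at key
  linarith [key]

lemma sum_exp_pow {n r : ℕ} (f : Fin n → ℝ) :
    ∑ R : Fin r → Fin n, ∏ l, f (R l) = (∑ j, f j) ^ r := by
  rw [← Fintype.piFinset_univ, ← Finset.prod_univ_sum]
  simp [Finset.prod_const]

lemma mgf_sum_bound {n r : ℕ} (hn : 0 < n) {c : ℝ} (hc : 0 < c) (a : Fin n → ℝ)
    (ha : ∀ j, 0 ≤ a j ∧ a j ≤ c) (t : ℝ) :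
    ∑ R : Fin r → Fin n, Real.exp (t * ∑ l, a (R l)) ≤
      (n : ℝ) ^ r * Real.exp ((r * (∑ j, a j) / n) * ((Real.exp (t * c) - 1) / c)) := by
  have hn' : (0:ℝ) < n := by exact_mod_cast hn
  have h1 : ∀ R : Fin r → Fin n, Real.exp (t * ∑ l, a (R l)) = ∏ l, Real.exp (t * a (R l)) := by
    intro R; rw [Finset.mul_sum, Real.exp_sum]
  simp_rw [h1]
  rw [sum_exp_pow (fun j => Real.exp (t * a j))]
  have h2 : ∑ j, Real.exp (t * a j) ≤
      (n : ℝ) * Real.exp ((∑ j, a j) / (n * c) * (Real.exp (t * c) - 1)) := by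
    calc ∑ j, Real.exp (t * a j) ≤ ∑ j, (1 + (a j / c) * (Real.exp (t * c) - 1)) :=
          Finset.sum_le_sum fun j _ => exp_mul_le_convex hc (ha j).1 (ha j).2
      _ = (n : ℝ) * (1 + (∑ j, a j) / (n * c) * (Real.exp (t * c) - 1)) := by
          rw [Finset.sum_add_distrib, Finset.sum_const, Finset.card_univ, Fintype.card_fin]
          rw [← Finset.sum_mul, ← Finset.sum_div]
          field_simp
          ring
      _ ≤ (n : ℝ) * Real.exp ((∑ j, a j) / (n * c) * (Real.exp (t * c) - 1)) := by
          apply mul_le_mul_of_nonneg_left (Real.add_one_le_exp _ |>.trans_eq' (by ring)) hn'.le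
  calc (∑ j, Real.exp (t * a j)) ^ r
      ≤ ((n : ℝ) * Real.exp ((∑ j, a j) / (n * c) * (Real.exp (t * c) - 1))) ^ r := by
        apply pow_le_pow_left₀ (Finset.sum_nonneg fun j _ => (Real.exp_pos _).le) h2
    _ = (n : ℝ) ^ r * Real.exp ((r * (∑ j, a j) / n) * ((Real.exp (t * c) - 1) / c)) := by
        rw [mul_pow, ← Real.exp_nat_mul]
        congr 1
        field_simp

lemma exp_quad_bound {u : ℝ} (hu : |u| ≤ 1) :
    Real.exp u ≤ 1 + u + 3 / 4 * u ^ 2 := by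
  have h := Real.exp_bound hu (by norm_num : 0 < 2)
  have h2 : ∑ m ∈ Finset.range 2, u ^ m / (m.factorial : ℝ) = 1 + u := by
    simp [Finset.sum_range_succ]
  rw [h2] at h
  have h3 : |u| ^ 2 * (((Nat.succ 2 : ℕ) : ℝ) / ((Nat.factorial 2 : ℕ) * (2:ℕ))) = 3 / 4 * u ^ 2 := by
    rw [sq_abs]; norm_num [Nat.factorial]; ring
  rw [h3] at h
  have := abs_le.1 h
  linarith [this.2]

lemma card_filter_le_sum {α : Type*} [Fintype α] (p : α → Prop) [DecidablePred p]
    (g : α → ℝ) (w : ℝ) (hw : 0 < w) (hg : ∀ x, 0 ≤ g x) (h : ∀ x, p x → w ≤ g x) :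
    ((Finset.univ.filter p).card : ℝ) ≤ (∑ x, g x) / w := by
  rw [le_div_iff₀ hw]
  calc ((Finset.univ.filter p).card : ℝ) * w = ∑ _x ∈ Finset.univ.filter p, w := by
        rw [Finset.sum_const, nsmul_eq_mul]
    _ ≤ ∑ x ∈ Finset.univ.filter p, g x :=
        Finset.sum_le_sum fun x hx => h x (Finset.mem_filter.1 hx).2
    _ ≤ ∑ x, g x := Finset.sum_le_sum_of_subset_of_nonneg (Finset.filter_subset _ _)
        (fun x _ _ => hg x)

lemma tailU_arith (μ B c u α1 dl : ℝ) (hc : 0 < c) (hμ0 : 0 ≤ μ) (hB0 : 0 < B)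
    (hα1 : 0 < α1) (hα1' : α1 < 1) (hu : u = 2 * α1 / 3)
    (hquad : Real.exp u ≤ 1 + u + 3 / 4 * u ^ 2)
    (key' : dl * (3 * c) ≤ α1 ^ 2 * B) :
    μ * (Real.exp u - 1) - u * ((1 + α1) * μ + (1 + α1) * B) ≤ -dl * c := by
  have hexp1 : Real.exp u - 1 - u * (1 + α1) ≤ -(α1 ^ 2) / 3 := by
    nlinarith [hquad, hu]
  nlinarith [mul_le_mul_of_nonneg_left hexp1 hμ0, key', hB0, hμ0, hu,
    mul_pos hα1 hB0, mul_nonneg (mul_nonneg hα1.le hα1.le) hB0.le]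

lemma tailL_arith (μ B c u α1 dl : ℝ) (hc : 0 < c) (hμ0 : 0 ≤ μ) (hB0 : 0 < B)
    (hBμ : B ≤ μ) (hα1 : 0 < α1) (hα1' : α1 < 1) (hu : u = 2 * α1 / 3)
    (hquad' : Real.exp (-u) ≤ 1 + -u + 3 / 4 * (-u) ^ 2)
    (key' : dl * (3 * c) ≤ α1 ^ 2 * B) :
    μ * (Real.exp (-u) - 1) + u * ((1 - α1) * μ - (1 - α1) * B) ≤ -dl * c := by
  have hu0 : 0 < u := by rw [hu]; positivity
  have hexp2 : Real.exp (-u) - 1 + u * (1 - α1) ≤ -(α1 ^ 2) / 3 := by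
    nlinarith [hquad', hu]
  nlinarith [mul_le_mul_of_nonneg_left hexp2 hμ0, key', hBμ, hB0, hμ0, hu,
    mul_nonneg (mul_nonneg hu0.le (by linarith : (0:ℝ) ≤ 1 - α1)) hB0.le,
    mul_le_mul_of_nonneg_left hBμ (by positivity : (0:ℝ) ≤ α1 ^ 2)]

set_option maxHeartbeats 2000000 in
open Classical in
theorem sampling_core (n d r : ℕ) (hn : 2 ≤ n) (hrpos : 0 < r)
    (c A : ℝ) (hc : 0 < c) (hA : 0 < A)
    (a : Fin n → ℝ) (ha : ∀ j, 0 ≤ a j ∧ a j ≤ c)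
    (α1 : ℝ) (hα1 : 0 < α1) (hα1' : α1 < 1)
    (L U : ℝ) (hL : L = (1 - α1) * (∑ j, a j) - (1 - α1) * A)
    (hU : U = (1 + α1) * (∑ j, a j) + (1 + α1) * A)
    (key : ((d : ℝ) + 1) * Real.log n * (3 * c) ≤ α1 ^ 2 * ((r : ℝ) * A / n)) :
    (1 : ℝ) - 2 / (n : ℝ) ^ (d + 1) ≤
      ((Finset.univ.filter fun R : Fin r → Fin n =>
          L ≤ ((n : ℝ) / r) * ∑ l, a (R l) ∧
          ((n : ℝ) / r) * ∑ l, a (R l) ≤ U).card : ℝ) / (n : ℝ) ^ r := by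
  classical
  have hn' : (0:ℝ) < n := by positivity
  have hn1 : (1:ℝ) < n := by exact_mod_cast hn
  have hlog : 0 < Real.log n := Real.log_pos hn1
  have hr0 : (0:ℝ) < r := by exact_mod_cast hrpos
  obtain ⟨m, hm⟩ : ∃ m : ℝ, m = ∑ j, a j := ⟨_, rfl⟩
  have hm0 : 0 ≤ m := hm ▸ Finset.sum_nonneg fun j _ => (ha j).1
  obtain ⟨μ, hμ⟩ : ∃ μ : ℝ, μ = (r : ℝ) * m / n := ⟨_, rfl⟩
  obtain ⟨B, hB⟩ : ∃ B : ℝ, B = (r : ℝ) * A / n := ⟨_, rfl⟩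
  have hμ0 : 0 ≤ μ := by rw [hμ]; positivity
  have hB0 : 0 < B := by rw [hB]; positivity
  have key' : ((d : ℝ) + 1) * Real.log n * (3 * c) ≤ α1 ^ 2 * B := by rw [hB]; exact key
  obtain ⟨u, hu⟩ : ∃ u : ℝ, u = 2 * α1 / 3 := ⟨_, rfl⟩
  have hu0 : 0 < u := by rw [hu]; positivity
  have hu1 : |u| ≤ 1 := by rw [abs_le, hu]; constructor <;> linarith
  have hquad := exp_quad_bound hu1
  have hquad' := exp_quad_bound (u := -u) (by rwa [abs_neg])
  have hrn : (r : ℝ) / n * ((n : ℝ) / r) = 1 := by field_simp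
  have hpowpos : (0:ℝ) < (n : ℝ) ^ (d + 1) := by positivity
  have hnr : (0:ℝ) < (n : ℝ) ^ r := by positivity
  have hexp_eq : Real.exp (-(((d : ℝ) + 1) * Real.log n)) = 1 / (n : ℝ) ^ (d + 1) := by
    rw [Real.exp_neg, show ((d : ℝ) + 1) = ((d + 1 : ℕ) : ℝ) from by push_cast; ring,
      Real.exp_nat_mul, Real.exp_log hn', one_div]
  have hS0 : ∀ R : Fin r → Fin n, 0 ≤ ∑ l, a (R l) :=
    fun R => Finset.sum_nonneg fun l _ => (ha (R l)).1
  -- upper tail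
  have hupper : ((Finset.univ.filter fun R : Fin r → Fin n =>
      ¬ (((n : ℝ) / r) * ∑ l, a (R l) ≤ U)).card : ℝ) ≤ (n : ℝ) ^ r / (n : ℝ) ^ (d + 1) := by
    obtain ⟨t, ht⟩ : ∃ t : ℝ, t = u / c := ⟨_, rfl⟩
    have ht0 : 0 ≤ t := by rw [ht]; positivity
    have htc : t * c = u := by rw [ht]; field_simp
    have hmgf' : ∑ R : Fin r → Fin n, Real.exp (t * ∑ l, a (R l))
        ≤ (n : ℝ) ^ r * Real.exp (μ * ((Real.exp u - 1) / c)) := by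
      have h := mgf_sum_bound (show 0 < n by omega) hc a ha (r := r) t
      rw [htc, ← hm, ← hμ] at h
      exact h
    have hmark := card_filter_le_sum (fun R : Fin r → Fin n =>
        ¬ (((n : ℝ) / r) * ∑ l, a (R l) ≤ U))
      (fun R => Real.exp (t * ∑ l, a (R l))) (Real.exp (t * ((r : ℝ) / n * U)))
      (Real.exp_pos _) (fun R => (Real.exp_pos _).le) ?_
    · have h1 : (r : ℝ) / n * U = (1 + α1) * μ + (1 + α1) * B := by
        rw [hU, hμ, hB, hm]; ring
      have hE : μ * ((Real.exp u - 1) / c) - t * ((r : ℝ) / n * U)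
          ≤ -(((d : ℝ) + 1) * Real.log n) := by
        rw [h1]
        refine le_of_mul_le_mul_right ?_ hc
        have h2 : (μ * ((Real.exp u - 1) / c) - t * ((1 + α1) * μ + (1 + α1) * B)) * c
            = μ * (Real.exp u - 1) - u * ((1 + α1) * μ + (1 + α1) * B) := by
          rw [ht]; field_simp
        rw [h2]
        exact tailU_arith μ B c u α1 (((d : ℝ) + 1) * Real.log n) hc hμ0 hB0 hα1 hα1' hu hquad key'
      calc ((Finset.univ.filter fun R : Fin r → Fin n =>
            ¬ (((n : ℝ) / r) * ∑ l, a (R l) ≤ U)).card : ℝ)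
          ≤ (∑ R : Fin r → Fin n, Real.exp (t * ∑ l, a (R l))) /
              Real.exp (t * ((r : ℝ) / n * U)) := hmark
        _ ≤ ((n : ℝ) ^ r * Real.exp (μ * ((Real.exp u - 1) / c))) /
              Real.exp (t * ((r : ℝ) / n * U)) := by gcongr
        _ = (n : ℝ) ^ r * Real.exp (μ * ((Real.exp u - 1) / c) - t * ((r : ℝ) / n * U)) := by
              rw [Real.exp_sub, mul_div_assoc]
        _ ≤ (n : ℝ) ^ r * Real.exp (-(((d : ℝ) + 1) * Real.log n)) := by
              gcongr
        _ = (n : ℝ) ^ r / (n : ℝ) ^ (d + 1) := by rw [hexp_eq, mul_one_div]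
    · intro R hR
      push_neg at hR
      apply Real.exp_le_exp.2
      apply mul_le_mul_of_nonneg_left _ ht0
      have h := mul_le_mul_of_nonneg_left hR.le (by positivity : (0:ℝ) ≤ (r : ℝ) / n)
      rwa [← mul_assoc, hrn, one_mul] at h
  -- lower tail
  have hlower : ((Finset.univ.filter fun R : Fin r → Fin n =>
      ¬ (L ≤ ((n : ℝ) / r) * ∑ l, a (R l))).card : ℝ) ≤ (n : ℝ) ^ r / (n : ℝ) ^ (d + 1) := by
    by_cases hmA : m ≤ A
    · have hempty : (Finset.univ.filter fun R : Fin r → Fin n =>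
          ¬ (L ≤ ((n : ℝ) / r) * ∑ l, a (R l))) = ∅ := by
        apply Finset.filter_eq_empty_iff.2
        intro R _
        rw [not_not]
        have hL0 : L ≤ 0 := by
          rw [hL, ← hm]
          have h := mul_le_mul_of_nonneg_left hmA (by linarith : (0:ℝ) ≤ 1 - α1)
          linarith
        have : (0:ℝ) ≤ ((n : ℝ) / r) * ∑ l, a (R l) :=
          mul_nonneg (by positivity) (hS0 R)
        linarith
      rw [hempty]
      simp
      positivity
    · push_neg at hmA
      have hBμ : B ≤ μ := by rw [hμ, hB]; gcongr
      obtain ⟨t, ht⟩ : ∃ t : ℝ, t = -(u / c) := ⟨_, rfl⟩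
      have ht0 : t ≤ 0 := by rw [ht]; simp; positivity
      have htc : t * c = -u := by rw [ht]; field_simp
      have hmgf' : ∑ R : Fin r → Fin n, Real.exp (t * ∑ l, a (R l))
          ≤ (n : ℝ) ^ r * Real.exp (μ * ((Real.exp (-u) - 1) / c)) := by
        have h := mgf_sum_bound (show 0 < n by omega) hc a ha (r := r) t
        rw [htc, ← hm, ← hμ] at h
        exact h
      have hmark := card_filter_le_sum (fun R : Fin r → Fin n =>
          ¬ (L ≤ ((n : ℝ) / r) * ∑ l, a (R l)))
        (fun R => Real.exp (t * ∑ l, a (R l))) (Real.exp (t * ((r : ℝ) / n * L)))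
        (Real.exp_pos _) (fun R => (Real.exp_pos _).le) ?_
      · have h1 : (r : ℝ) / n * L = (1 - α1) * μ - (1 - α1) * B := by
          rw [hL, hμ, hB, hm]; ring
        have hE : μ * ((Real.exp (-u) - 1) / c) - t * ((r : ℝ) / n * L)
            ≤ -(((d : ℝ) + 1) * Real.log n) := by
          rw [h1]
          refine le_of_mul_le_mul_right ?_ hc
          have h2 : (μ * ((Real.exp (-u) - 1) / c) - t * ((1 - α1) * μ - (1 - α1) * B)) * c
              = μ * (Real.exp (-u) - 1) + u * ((1 - α1) * μ - (1 - α1) * B) := by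
            rw [ht]; field_simp; ring
          rw [h2]
          exact tailL_arith μ B c u α1 (((d : ℝ) + 1) * Real.log n) hc hμ0 hB0 hBμ hα1 hα1' hu hquad' key'
        calc ((Finset.univ.filter fun R : Fin r → Fin n =>
              ¬ (L ≤ ((n : ℝ) / r) * ∑ l, a (R l))).card : ℝ)
            ≤ (∑ R : Fin r → Fin n, Real.exp (t * ∑ l, a (R l))) /
                Real.exp (t * ((r : ℝ) / n * L)) := hmark
          _ ≤ ((n : ℝ) ^ r * Real.exp (μ * ((Real.exp (-u) - 1) / c))) /
                Real.exp (t * ((r : ℝ) / n * L)) := by gcongr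
          _ = (n : ℝ) ^ r * Real.exp (μ * ((Real.exp (-u) - 1) / c) - t * ((r : ℝ) / n * L)) := by
                rw [Real.exp_sub, mul_div_assoc]
          _ ≤ (n : ℝ) ^ r * Real.exp (-(((d : ℝ) + 1) * Real.log n)) := by
                gcongr
          _ = (n : ℝ) ^ r / (n : ℝ) ^ (d + 1) := by rw [hexp_eq, mul_one_div]
      · intro R hR
        push_neg at hR
        apply Real.exp_le_exp.2
        have h := mul_le_mul_of_nonneg_left hR.le (by positivity : (0:ℝ) ≤ (r : ℝ) / n)
        rw [← mul_assoc, hrn, one_mul] at h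
        exact mul_le_mul_of_nonpos_left h ht0
  -- combine
  have htot := Finset.card_filter_add_card_filter_not
    (s := (Finset.univ : Finset (Fin r → Fin n)))
    (p := fun R => L ≤ ((n : ℝ) / r) * ∑ l, a (R l) ∧ ((n : ℝ) / r) * ∑ l, a (R l) ≤ U)
  have hcardtot : (Finset.univ : Finset (Fin r → Fin n)).card = n ^ r := by
    rw [Finset.card_univ, Fintype.card_fun]
    simp
  have hsub : (Finset.univ.filter fun R : Fin r → Fin n =>
        ¬ (L ≤ ((n : ℝ) / r) * ∑ l, a (R l) ∧ ((n : ℝ) / r) * ∑ l, a (R l) ≤ U)).card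
      ≤ (Finset.univ.filter fun R : Fin r → Fin n =>
          ¬ (L ≤ ((n : ℝ) / r) * ∑ l, a (R l))).card
        + (Finset.univ.filter fun R : Fin r → Fin n =>
          ¬ (((n : ℝ) / r) * ∑ l, a (R l) ≤ U)).card := by
    refine le_trans (Finset.card_le_card ?_) (Finset.card_union_le _ _)
    intro R hR
    rw [Finset.mem_filter] at hR
    rcases not_and_or.1 hR.2 with h | h
    · exact Finset.mem_union_left _ (Finset.mem_filter.2 ⟨Finset.mem_univ _, h⟩)
    · exact Finset.mem_union_right _ (Finset.mem_filter.2 ⟨Finset.mem_univ _, h⟩)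
  have hgood : (n : ℝ) ^ r - 2 * ((n : ℝ) ^ r / (n : ℝ) ^ (d + 1))
      ≤ ((Finset.univ.filter fun R : Fin r → Fin n =>
          L ≤ ((n : ℝ) / r) * ∑ l, a (R l) ∧
          ((n : ℝ) / r) * ∑ l, a (R l) ≤ U).card : ℝ) := by
    have h1 : ((Finset.univ.filter fun R : Fin r → Fin n =>
          L ≤ ((n : ℝ) / r) * ∑ l, a (R l) ∧
          ((n : ℝ) / r) * ∑ l, a (R l) ≤ U).card : ℝ)
        + ((Finset.univ.filter fun R : Fin r → Fin n =>
          ¬ (L ≤ ((n : ℝ) / r) * ∑ l, a (R l) ∧ ((n : ℝ) / r) * ∑ l, a (R l) ≤ U)).card : ℝ)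
        = (n : ℝ) ^ r := by
      rw [← Nat.cast_add, htot, hcardtot]
      push_cast
      ring
    have h2 : ((Finset.univ.filter fun R : Fin r → Fin n =>
          ¬ (L ≤ ((n : ℝ) / r) * ∑ l, a (R l) ∧ ((n : ℝ) / r) * ∑ l, a (R l) ≤ U)).card : ℝ)
        ≤ 2 * ((n : ℝ) ^ r / (n : ℝ) ^ (d + 1)) := by
      calc ((Finset.univ.filter fun R : Fin r → Fin n =>
            ¬ (L ≤ ((n : ℝ) / r) * ∑ l, a (R l) ∧ ((n : ℝ) / r) * ∑ l, a (R l) ≤ U)).card : ℝ)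
          ≤ ((Finset.univ.filter fun R : Fin r → Fin n =>
              ¬ (L ≤ ((n : ℝ) / r) * ∑ l, a (R l))).card : ℝ)
            + ((Finset.univ.filter fun R : Fin r → Fin n =>
              ¬ (((n : ℝ) / r) * ∑ l, a (R l) ≤ U)).card : ℝ) := by exact_mod_cast hsub
        _ ≤ 2 * ((n : ℝ) ^ r / (n : ℝ) ^ (d + 1)) := by linarith [hlower, hupper]
    linarith
  rw [le_div_iff₀ hnr]
  have he : ((1:ℝ) - 2 / (n : ℝ) ^ (d + 1)) * (n : ℝ) ^ r
      = (n : ℝ) ^ r - 2 * ((n : ℝ) ^ r / (n : ℝ) ^ (d + 1)) := by ring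
  rw [he]
  exact hgood

set_option maxHeartbeats 2000000 in
open Classical in
/-- One-sided sampling lemma (nonnegative coefficients): with a sample of size
    r = ⌈γ·n^{1−δ}·ln n⌉ chosen uniformly with replacement, the estimation
    ρ = (n/r)·Σ_l ρ_{R_l}·x_{R_l} of ρ̂ = Σ_j ρ_j x_j satisfies
    (1−α1)ρ̂ − (1−α1)α2 n^{q+δ} ≤ ρ ≤ (1+α1)ρ̂ + (1+α1)α2 n^{q+δ}
    with probability at least 1 − 2/n^{d+1}. -/
theorem sampling_lemma (n d q : ℕ) (δ β α1 α2 γ : ℝ)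
    (hn : 2 ≤ n) (hδ : 0 < δ) (hδ1 : δ ≤ 1) (hd : 1 ≤ d) (hβ : 1 ≤ β)
    (hα1 : 0 < α1) (hα1' : α1 < 1) (hα2 : 0 < α2)
    (hγ : 3 * ((d : ℝ) + 1) * ((q : ℝ) + 1) * β / (α1 ^ 2 * α2) ≤ γ)
    (x : Fin n → ℝ) (hx : ∀ i, x i = 0 ∨ x i = 1)
    (ρc : Fin n → ℝ) (hρc : ∀ j, 0 ≤ ρc j ∧ ρc j ≤ ((q : ℝ) + 1) * β * (n : ℝ) ^ q)
    (r : ℕ) (hr : r = ⌈γ * (n : ℝ) ^ ((1 : ℝ) - δ) * Real.log n⌉₊) :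
    (1 : ℝ) - 2 / (n : ℝ) ^ (d + 1) ≤
      ((Finset.univ.filter fun R : Fin r → Fin n =>
          (1 - α1) * (∑ j, ρc j * x j)
              - (1 - α1) * α2 * (n : ℝ) ^ ((q : ℝ) + δ) ≤
            ((n : ℝ) / r) * ∑ l, ρc (R l) * x (R l) ∧
          ((n : ℝ) / r) * ∑ l, ρc (R l) * x (R l) ≤
            (1 + α1) * (∑ j, ρc j * x j)
              + (1 + α1) * α2 * (n : ℝ) ^ ((q : ℝ) + δ)).card : ℝ) /
        (n : ℝ) ^ r := by
  have hn' : (0:ℝ) < n := by positivity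
  have hn1 : (1:ℝ) < n := by exact_mod_cast hn
  have hlog : 0 < Real.log n := Real.log_pos hn1
  have hc : 0 < ((q:ℝ)+1)*β*(n:ℝ)^q := by positivity
  have hγ0 : 0 < γ := lt_of_lt_of_le (by positivity) hγ
  have hrpos : 0 < r := by
    rw [hr]; exact Nat.ceil_pos.2 (by positivity)
  have hrr : γ * (n:ℝ)^((1:ℝ)-δ) * Real.log n ≤ (r:ℝ) := by rw [hr]; exact Nat.le_ceil _
  have hA : 0 < α2 * (n:ℝ)^((q:ℝ)+δ) := by positivity
  have ha : ∀ j, 0 ≤ ρc j * x j ∧ ρc j * x j ≤ ((q:ℝ)+1)*β*(n:ℝ)^q := by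
    intro j
    rcases hx j with h | h
    · simp [h, hc.le]
    · simpa [h] using hρc j
  have hpow : (n : ℝ) ^ ((1 : ℝ) - δ) * (n : ℝ) ^ (δ:ℝ) = (n : ℝ) := by
    rw [← Real.rpow_add hn']; simp
  have hNqδ : (n:ℝ)^((q:ℝ)+δ) = (n:ℝ)^q * (n:ℝ)^(δ:ℝ) := by
    rw [Real.rpow_add hn', Real.rpow_natCast]
  have hB1 : γ * α2 * Real.log n * (n:ℝ)^q ≤ (r:ℝ) * (α2 * (n:ℝ)^((q:ℝ)+δ)) / n := by
    have e1 : γ * α2 * Real.log n * (n:ℝ)^q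
        = (γ * (n:ℝ)^((1:ℝ)-δ) * Real.log n) * (α2 * ((n:ℝ)^q * (n:ℝ)^(δ:ℝ))) / n := by
      rw [show γ * (n:ℝ)^((1:ℝ)-δ) * Real.log n * (α2 * ((n:ℝ)^q * (n:ℝ)^(δ:ℝ)))
          = γ * α2 * Real.log n * (n:ℝ)^q * ((n:ℝ)^((1:ℝ)-δ) * (n:ℝ)^(δ:ℝ)) from by ring, hpow]
      field_simp
    rw [e1, hNqδ]
    gcongr
  have hγ' : 3*((d:ℝ)+1)*((q:ℝ)+1)*β ≤ α1^2*α2*γ := by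
    rw [div_le_iff₀ (by positivity)] at hγ; linarith
  have key : ((d:ℝ)+1)*Real.log n*(3*(((q:ℝ)+1)*β*(n:ℝ)^q))
      ≤ α1^2*((r:ℝ)*(α2*(n:ℝ)^((q:ℝ)+δ))/n) := by
    have h1 := mul_le_mul_of_nonneg_left hB1 (by positivity : (0:ℝ) ≤ α1^2)
    have h2 := mul_le_mul_of_nonneg_right hγ' (by positivity : (0:ℝ) ≤ Real.log n * (n:ℝ)^q)
    nlinarith [h1, h2]
  exact sampling_core n d r hn hrpos _ _ hc hA (fun j => ρc j * x j) ha α1 hα1 hα1'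
    _ _ (by ring) (by ring) key
end

section
/- Let n ≥ 2 be an integer, δ > 0, let k ≥ 1 and q ≥ 0 be integers, β ≥ 1, α ∈ (0,1), and assume n^δ/ln(n) ≥ 3(k+1)(q+1)β/α³. Let y ∈ [0,1]^n and let z_1,…,z_n be independent random variables with z_j = 1 with probability y_j and z_j = 0 otherwise. Let ρ_1,…,ρ_n be reals with 0 ≤ ρ_j ≤ (q+1)·β·n^q for every j, and set ρ = Σ_{j=1}^n ρ_j·z_j and ρ̂ = Σ_{j=1}^n ρ_j·y_j. Then with probability at least 1 − 2/n^{k+1}: (1−α)·ρ̂ − (1−α)·α·n^{q+δ} ≤ ρ ≤ (1+α)·ρ̂ + (1+α)·α·n^{q+δ}. -/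
open Finset

lemma factor_sum {n : ℕ} (f : Fin n → Bool → ℝ) :
    ∑ z : Fin n → Bool, ∏ j, f j (z j) = ∏ j, (f j true + f j false) := by
  rw [← Fintype.prod_sum f]
  exact Finset.prod_congr rfl fun j _ => by simp [Fintype.sum_bool]

lemma exp_interp (r M t : ℝ) (hM : 0 < M) (h0 : 0 ≤ r) (hr : r ≤ M) :
    Real.exp (t * r) ≤ 1 + r / M * (Real.exp (t * M) - 1) := by
  have hlam0 : 0 ≤ r / M := div_nonneg h0 hM.le
  have hlam1 : r / M ≤ 1 := (div_le_one hM).2 hr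
  have h := convexOn_exp.2 (Set.mem_univ (0:ℝ)) (Set.mem_univ (t*M))
    (by linarith : (0:ℝ) ≤ 1 - r/M) hlam0 (by ring)
  simp only [smul_eq_mul, mul_zero, zero_add, Real.exp_zero, mul_one] at h
  have harg : r/M * (t*M) = t*r := by field_simp
  rw [harg] at h
  linarith

lemma chernoff_aux {n : ℕ} (y ρc : Fin n → ℝ) (hy : ∀ j, 0 ≤ y j ∧ y j ≤ 1)
    (hρ0 : ∀ j, 0 ≤ ρc j) (M : ℝ) (hM : 0 < M) (hρM : ∀ j, ρc j ≤ M)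
    (t a : ℝ) (P : (Fin n → Bool) → Prop) [DecidablePred P]
    (hP : ∀ z, P z → t * a ≤ t * (∑ j, ρc j * (if z j then (1:ℝ) else 0))) :
    ∑ z : Fin n → Bool, (if P z then ∏ j, (if z j then y j else 1 - y j) else 0)
      ≤ Real.exp ((∑ j, ρc j * y j) / M * (Real.exp (t * M) - 1) - t * a) := by
  have hW : ∀ z : Fin n → Bool, (0:ℝ) ≤ ∏ j, (if z j then y j else 1 - y j) := by
    intro z
    exact Finset.prod_nonneg fun j _ => by
      by_cases h : z j <;> simp [h] <;> [exact (hy j).1; linarith [(hy j).2]]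
  have step1 : ∑ z : Fin n → Bool, (if P z then ∏ j, (if z j then y j else 1 - y j) else 0)
      ≤ ∑ z : Fin n → Bool, (∏ j, (if z j then y j else 1 - y j)) *
          Real.exp (t * (∑ j, ρc j * (if z j then (1:ℝ) else 0)) - t * a) := by
    apply Finset.sum_le_sum
    intro z _
    by_cases h : P z
    · rw [if_pos h]
      have := hP z h
      exact le_mul_of_one_le_right (hW z) (Real.one_le_exp (by linarith))
    · rw [if_neg h]
      exact mul_nonneg (hW z) (Real.exp_pos _).le
  have step2 : ∀ z : Fin n → Bool,
      (∏ j, (if z j then y j else 1 - y j)) *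
          Real.exp (t * (∑ j, ρc j * (if z j then (1:ℝ) else 0)) - t * a)
        = Real.exp (-(t*a)) * ∏ j, (if z j then y j * Real.exp (t * ρc j) else 1 - y j) := by
    intro z
    have h1 : t * (∑ j, ρc j * (if z j then (1:ℝ) else 0)) - t*a
        = (∑ j, t * (ρc j * (if z j then (1:ℝ) else 0))) + (-(t*a)) := by
      rw [Finset.mul_sum]; ring
    have h2 : (∏ j, (if z j then y j else 1 - y j)) * (∏ j, Real.exp (t * (ρc j * (if z j then (1:ℝ) else 0))))
        = ∏ j, (if z j then y j * Real.exp (t * ρc j) else 1 - y j) := by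
      rw [← Finset.prod_mul_distrib]
      exact Finset.prod_congr rfl fun j _ => by by_cases h : z j <;> simp [h]
    rw [h1, Real.exp_add, Real.exp_sum, ← h2]
    ring
  have step3 : ∑ z : Fin n → Bool, (∏ j, (if z j then y j else 1 - y j)) *
          Real.exp (t * (∑ j, ρc j * (if z j then (1:ℝ) else 0)) - t * a)
      = Real.exp (-(t*a)) * ∏ j, (y j * Real.exp (t * ρc j) + (1 - y j)) := by
    simp only [step2, ← Finset.mul_sum]
    congr 1
    exact factor_sum (fun j b => if b then y j * Real.exp (t * ρc j) else 1 - y j)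
  have step4 : ∏ j, (y j * Real.exp (t * ρc j) + (1 - y j))
      ≤ Real.exp ((∑ j, ρc j * y j) / M * (Real.exp (t*M) - 1)) := by
    have hsum : (∑ j, ρc j * y j) / M * (Real.exp (t*M) - 1)
        = ∑ j, y j * (ρc j / M * (Real.exp (t*M) - 1)) := by
      rw [Finset.sum_div, Finset.sum_mul]
      exact Finset.sum_congr rfl fun j _ => by ring
    rw [hsum, Real.exp_sum]
    apply Finset.prod_le_prod
    · intro j _
      have := (hy j).1; have := (hy j).2
      have := (Real.exp_pos (t * ρc j)).le
      nlinarith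
    · intro j _
      have hconv := exp_interp (ρc j) M t hM (hρ0 j) (hρM j)
      have hy1 := (hy j).1
      have key : y j * Real.exp (t * ρc j) + (1 - y j)
          ≤ 1 + y j * (ρc j / M * (Real.exp (t*M) - 1)) := by nlinarith
      exact key.trans (by linarith [Real.add_one_le_exp (y j * (ρc j / M * (Real.exp (t*M) - 1)))])
  calc ∑ z : Fin n → Bool, (if P z then ∏ j, (if z j then y j else 1 - y j) else 0)
      ≤ _ := step1
    _ = Real.exp (-(t*a)) * ∏ j, (y j * Real.exp (t * ρc j) + (1 - y j)) := step3
    _ ≤ Real.exp (-(t*a)) * Real.exp ((∑ j, ρc j * y j) / M * (Real.exp (t*M) - 1)) := by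
        exact mul_le_mul_of_nonneg_left step4 (Real.exp_pos _).le
    _ = Real.exp ((∑ j, ρc j * y j) / M * (Real.exp (t*M) - 1) - t * a) := by
        rw [← Real.exp_add]; ring_nf

lemma upper_poly (α u d L E : ℝ) (hα : 0 < α) (hα' : α < 1) (hu : 0 ≤ u) (hd : 0 ≤ d)
    (hE : E * (1 - α/2) ≤ 1) (hL : L ≤ α^2*d/3) :
    u * (E - 1) - α/(2:ℝ) * ((1+α)*u + (1+α)*d) ≤ -L := by
  have h1 : E - 1 ≤ α/2 * (1+α) := by nlinarith [mul_nonneg (mul_nonneg hα.le hα.le) (sub_nonneg.2 hα'.le)]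
  nlinarith [mul_le_mul_of_nonneg_left h1 hu, mul_nonneg (mul_nonneg hα.le hd) hα.le,
    mul_nonneg hα.le hd]

lemma lower_poly (α u d L E : ℝ) (hα : 0 < α) (hα' : α < 1) (hd : 0 ≤ d) (hud : d ≤ u)
    (hE : E * (1+α) ≤ 1) (hL : L ≤ α^2*d/3) :
    u * (E - 1) + α*((1-α)*u - (1-α)*d) ≤ -L := by
  have hX : α*(1-α) + E - 1 ≤ 0 := by nlinarith [mul_nonneg (mul_nonneg hα.le hα.le) hα.le]
  have h2 : (u - d) * (α*(1-α)+E-1) ≤ 0 :=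
    mul_nonpos_of_nonneg_of_nonpos (sub_nonneg.2 hud) hX
  have h4 : d*(E-1) ≤ -(α^2*d/3) := by
    nlinarith [mul_le_mul_of_nonneg_left hE hd, mul_nonneg (mul_nonneg hα.le hd) hα.le,
      mul_nonneg hα.le hd, mul_nonneg (mul_nonneg (mul_nonneg hα.le hd) hα.le) hα.le]
  nlinarith [h2, h4, hL]

set_option maxHeartbeats 1600000 in
open Classical in
/-- One-sided rounding lemma (nonnegative coefficients): if z is obtained from
    y ∈ [0,1]^n by independent randomized rounding, then
    (1−α)ρ̂ − (1−α)α n^{q+δ} ≤ ρ ≤ (1+α)ρ̂ + (1+α)α n^{q+δ}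
    holds with probability at least 1 − 2/n^{k+1}, where
    ρ = Σ_j ρ_j z_j and ρ̂ = Σ_j ρ_j y_j. -/
theorem rounding_lemma (n k q : ℕ) (δ β α : ℝ)
    (hn : 2 ≤ n) (hδ : 0 < δ) (hk : 1 ≤ k) (hβ : 1 ≤ β) (hα : 0 < α) (hα' : α < 1)
    (hcond : 3 * ((k : ℝ) + 1) * ((q : ℝ) + 1) * β / α ^ 3 ≤ (n : ℝ) ^ δ / Real.log n)
    (y : Fin n → ℝ) (hy : ∀ j, 0 ≤ y j ∧ y j ≤ 1)
    (ρc : Fin n → ℝ) (hρc : ∀ j, 0 ≤ ρc j ∧ ρc j ≤ ((q : ℝ) + 1) * β * (n : ℝ) ^ q) :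
    (1 : ℝ) - 2 / (n : ℝ) ^ (k + 1) ≤
      ∑ z : Fin n → Bool,
        (if (1 - α) * (∑ j, ρc j * y j) - (1 - α) * α * (n : ℝ) ^ ((q : ℝ) + δ) ≤
              (∑ j, ρc j * (if z j then (1 : ℝ) else 0)) ∧
            (∑ j, ρc j * (if z j then (1 : ℝ) else 0)) ≤
              (1 + α) * (∑ j, ρc j * y j) + (1 + α) * α * (n : ℝ) ^ ((q : ℝ) + δ)
          then ∏ j, (if z j then y j else 1 - y j) else 0) := by
  have hn0 : (0:ℝ) < n := by
    have : (2:ℝ) ≤ n := by exact_mod_cast hn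
    linarith
  have hn1 : (1:ℝ) < n := by
    have : (2:ℝ) ≤ n := by exact_mod_cast hn
    linarith
  have hlog : 0 < Real.log n := Real.log_pos hn1
  have hβ0 : (0:ℝ) < β := by linarith
  set μ := ∑ j, ρc j * y j with hμdef
  have hμ0 : 0 ≤ μ := Finset.sum_nonneg fun j _ => mul_nonneg (hρc j).1 (hy j).1
  set M := ((q:ℝ)+1) * β * (n:ℝ)^q with hMdef
  have hq1 : (0:ℝ) < (q:ℝ)+1 := by positivity
  have hnq : (0:ℝ) < (n:ℝ)^q := pow_pos hn0 q
  have hM : 0 < M := mul_pos (mul_pos hq1 hβ0) hnq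
  set X := (n:ℝ) ^ ((q:ℝ)+δ) with hXdef
  have hX : X = (n:ℝ)^q * (n:ℝ)^δ := by
    rw [hXdef, Real.rpow_add hn0, Real.rpow_natCast]
  have hXpos : 0 < X := by
    rw [hX]; exact mul_pos hnq (Real.rpow_pos_of_pos hn0 δ)
  have key : ((k:ℝ)+1) * Real.log n ≤ α^2 * (α * X / M) / 3 := by
    rw [div_le_div_iff₀ (pow_pos hα 3) hlog] at hcond
    have heq : α^2 * (α * X / M) / 3 = α^3 * (n:ℝ)^δ / (3*((q:ℝ)+1)*β) := by
      rw [hX, hMdef]; field_simp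
    have h3q : (0:ℝ) < 3*((q:ℝ)+1)*β := by positivity
    rw [heq, le_div_iff₀ h3q]
    nlinarith [hcond]
  set L := (1 - α) * μ - (1 - α) * α * X with hLdef
  set U := (1 + α) * μ + (1 + α) * α * X with hUdef
  have hWnn : ∀ z : Fin n → Bool, (0:ℝ) ≤ ∏ j, (if z j then y j else 1 - y j) := by
    intro z
    exact Finset.prod_nonneg fun j _ => by
      by_cases h : z j <;> simp [h] <;> [exact (hy j).1; linarith [(hy j).2]]
  have hρz : ∀ z : Fin n → Bool, 0 ≤ ∑ j, ρc j * (if z j then (1:ℝ) else 0) := by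
    intro z
    exact Finset.sum_nonneg fun j _ => mul_nonneg (hρc j).1 (by by_cases h : z j <;> simp [h])
  have hpow : Real.exp (-(((k:ℝ)+1) * Real.log n)) = 1/(n:ℝ)^(k+1) := by
    rw [Real.exp_neg]
    have h : ((k:ℝ)+1) * Real.log n = ((k+1:ℕ):ℝ) * Real.log n := by push_cast; ring
    rw [h, Real.exp_nat_mul, Real.exp_log hn0, one_div]
  -- upper tail
  have hT2 : ∑ z : Fin n → Bool,
      (if U < (∑ j, ρc j * (if z j then (1:ℝ) else 0))
        then ∏ j, (if z j then y j else 1 - y j) else 0) ≤ 1/(n:ℝ)^(k+1) := by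
    have ht0 : 0 ≤ α/(2*M) := div_nonneg hα.le (by linarith)
    have happ := chernoff_aux y ρc hy (fun j => (hρc j).1) M hM (fun j => (hρc j).2)
      (α/(2*M)) U (fun z => U < ∑ j, ρc j * (if z j then (1:ℝ) else 0))
      (fun z hz => mul_le_mul_of_nonneg_left hz.le ht0)
    refine happ.trans ?_
    have htM : α/(2*M) * M = α/2 := by field_simp
    rw [htM]
    have hE2 : Real.exp (α/2) * (1 - α/2) ≤ 1 := by
      calc Real.exp (α/2) * (1 - α/2) ≤ Real.exp (α/2) * Real.exp (-(α/2)) :=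
            mul_le_mul_of_nonneg_left (by linarith [Real.add_one_le_exp (-(α/2))])
              (Real.exp_pos _).le
        _ = 1 := by rw [← Real.exp_add]; simp
    have hexp : μ / M * (Real.exp (α/2) - 1) - α/(2*M) * U ≤ -(((k:ℝ)+1) * Real.log n) := by
      have hta : α/(2*M) * U = α/2 * ((1+α)*(μ/M) + (1+α)*(α*X/M)) := by
        rw [hUdef]; field_simp
      rw [hta]
      exact upper_poly α (μ/M) (α*X/M) (((k:ℝ)+1)*Real.log n) (Real.exp (α/2)) hα hα'
        (div_nonneg hμ0 hM.le) (div_nonneg (by positivity) hM.le) hE2 key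
    calc Real.exp (μ / M * (Real.exp (α/2) - 1) - α/(2*M) * U)
        ≤ Real.exp (-(((k:ℝ)+1) * Real.log n)) := Real.exp_le_exp.2 hexp
      _ = 1/(n:ℝ)^(k+1) := hpow
  -- lower tail
  have hT1 : ∑ z : Fin n → Bool,
      (if (∑ j, ρc j * (if z j then (1:ℝ) else 0)) < L
        then ∏ j, (if z j then y j else 1 - y j) else 0) ≤ 1/(n:ℝ)^(k+1) := by
    by_cases hcase : α * X ≤ μ
    · have hα0 : 0 ≤ α/M := div_nonneg hα.le hM.le
      have happ := chernoff_aux y ρc hy (fun j => (hρc j).1) M hM (fun j => (hρc j).2)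
        (-(α/M)) L (fun z => (∑ j, ρc j * (if z j then (1:ℝ) else 0)) < L)
        (fun z hz => by nlinarith [mul_le_mul_of_nonneg_left hz.le hα0])
      refine happ.trans ?_
      have htM : -(α/M) * M = -α := by field_simp
      rw [htM]
      have hE1 : Real.exp (-α) * (1+α) ≤ 1 := by
        calc Real.exp (-α) * (1+α) ≤ Real.exp (-α) * Real.exp α :=
              mul_le_mul_of_nonneg_left (by linarith [Real.add_one_le_exp α])
                (Real.exp_pos _).le
          _ = 1 := by rw [← Real.exp_add]; simp
      have hud : α*X/M ≤ μ/M := by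
        exact (div_le_div_iff_of_pos_right hM).2 hcase
      have hexp : μ / M * (Real.exp (-α) - 1) - (-(α/M)) * L ≤ -(((k:ℝ)+1) * Real.log n) := by
        have hta : μ / M * (Real.exp (-α) - 1) - (-(α/M)) * L
            = μ/M * (Real.exp (-α) - 1) + α*((1-α)*(μ/M) - (1-α)*(α*X/M)) := by
          rw [hLdef]; field_simp; ring_nf
        rw [hta]
        exact lower_poly α (μ/M) (α*X/M) (((k:ℝ)+1)*Real.log n) (Real.exp (-α)) hα hα'
          (div_nonneg (by positivity) hM.le) hud hE1 key
      calc Real.exp (μ / M * (Real.exp (-α) - 1) - (-(α/M)) * L)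
          ≤ Real.exp (-(((k:ℝ)+1) * Real.log n)) := Real.exp_le_exp.2 hexp
        _ = 1/(n:ℝ)^(k+1) := hpow
    · have hL0 : L ≤ 0 := by
        rw [hLdef]
        push_neg at hcase
        nlinarith
      have hzero : ∑ z : Fin n → Bool,
          (if (∑ j, ρc j * (if z j then (1:ℝ) else 0)) < L
            then ∏ j, (if z j then y j else 1 - y j) else 0) = 0 :=
        Finset.sum_eq_zero fun z _ => if_neg (not_lt.2 (le_trans hL0 (hρz z)))
      rw [hzero]
      positivity
  -- total mass
  have hWsum : ∑ z : Fin n → Bool, ∏ j, (if z j then y j else 1 - y j) = 1 := by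
    have h := factor_sum (fun j b => if b then y j else 1 - y j)
    simp only at h
    rw [h]
    simp
  -- pointwise split
  have hsplit : ∀ z : Fin n → Bool,
      (∏ j, (if z j then y j else 1 - y j))
        - (if (∑ j, ρc j * (if z j then (1:ℝ) else 0)) < L
            then ∏ j, (if z j then y j else 1 - y j) else 0)
        - (if U < (∑ j, ρc j * (if z j then (1:ℝ) else 0))
            then ∏ j, (if z j then y j else 1 - y j) else 0)
      ≤ (if L ≤ (∑ j, ρc j * (if z j then (1:ℝ) else 0)) ∧
            (∑ j, ρc j * (if z j then (1:ℝ) else 0)) ≤ U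
          then ∏ j, (if z j then y j else 1 - y j) else 0) := by
    intro z
    have hW := hWnn z
    by_cases h1 : (∑ j, ρc j * (if z j then (1:ℝ) else 0)) < L
    · rw [if_pos h1, if_neg (show ¬(L ≤ (∑ j, ρc j * (if z j then (1:ℝ) else 0)) ∧
          (∑ j, ρc j * (if z j then (1:ℝ) else 0)) ≤ U) from
          fun h => absurd h.1 (not_le.2 h1))]
      split_ifs with h2 <;> linarith
    · by_cases h2 : U < (∑ j, ρc j * (if z j then (1:ℝ) else 0))
      · rw [if_neg h1, if_pos h2, if_neg (show ¬(L ≤ (∑ j, ρc j * (if z j then (1:ℝ) else 0)) ∧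
            (∑ j, ρc j * (if z j then (1:ℝ) else 0)) ≤ U) from
            fun h => absurd h.2 (not_le.2 h2))]
        linarith
      · rw [if_neg h1, if_neg h2, if_pos ⟨not_lt.1 h1, not_lt.1 h2⟩]
        linarith
  have hsum := Finset.sum_le_sum fun z (_ : z ∈ Finset.univ) => hsplit z
  rw [Finset.sum_sub_distrib, Finset.sum_sub_distrib, hWsum] at hsum
  have h2 : (2:ℝ)/(n:ℝ)^(k+1) = 1/(n:ℝ)^(k+1) + 1/(n:ℝ)^(k+1) := by ring
  linarith [hT1, hT2, hsum]
end

section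
/- Let n ≥ 2 be an integer, δ > 0, let k ≥ 1 and q ≥ 0 be integers, β ≥ 1, α ∈ (0,1), and assume n^δ/ln(n) ≥ 3(k+1)(q+1)β/α³. Let y ∈ [0,1]^n and let z_1,…,z_n be independent random variables with z_j = 1 with probability y_j and z_j = 0 otherwise. Let ρ_1,…,ρ_n be reals with |ρ_j| ≤ (q+1)·β·n^q for every j, and set ρ = Σ_{j=1}^n ρ_j·z_j, ρ̂ = Σ_{j=1}^n ρ_j·y_j, and ρ̄ = Σ_{j=1}^n |ρ_j|. Then with probability at least 1 − 4/n^{k+1}: ρ̂ − α·ρ̄ − 2·α·n^{q+δ} ≤ ρ ≤ ρ̂ + α·ρ̄ + 2·α·n^{q+δ}. -/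
open Real Finset

lemma exp_le_one_add_add_sq {x : ℝ} (hx : |x| ≤ 1) : Real.exp x ≤ 1 + x + x ^ 2 := by
  have h := Real.exp_bound hx (n := 2) (by norm_num)
  have h2 : ∑ i ∈ Finset.range 2, x ^ i / i.factorial = 1 + x := by
    simp [Finset.sum_range_succ]
  rw [h2] at h
  norm_num [Nat.factorial] at h
  have habs : |x| ^ 2 = x ^ 2 := sq_abs x
  have := abs_le.mp h
  nlinarith [this.2]

lemma bernoulli_mgf {p u : ℝ} (hp : 0 ≤ p) (hp1 : p ≤ 1) (hu : |u| ≤ 1) :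
    p * Real.exp (u * (1 - p)) + (1 - p) * Real.exp (u * (0 - p)) ≤ Real.exp (u ^ 2) := by
  have h1 : |u * (1 - p)| ≤ 1 := by
    rw [abs_mul]
    calc |u| * |1 - p| ≤ 1 * 1 := by
          apply mul_le_mul hu _ (abs_nonneg _) zero_le_one
          rw [abs_le]; constructor <;> linarith
      _ = 1 := by ring
  have h2 : |u * (0 - p)| ≤ 1 := by
    rw [abs_mul]
    calc |u| * |0 - p| ≤ 1 * 1 := by
          apply mul_le_mul hu _ (abs_nonneg _) zero_le_one
          rw [abs_le]; constructor <;> linarith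
      _ = 1 := by ring
  have e1 := exp_le_one_add_add_sq h1
  have e2 := exp_le_one_add_add_sq h2
  have e3 : 1 + u ^ 2 ≤ Real.exp (u ^ 2) := by
    have := Real.add_one_le_exp (u ^ 2); linarith
  nlinarith [Real.exp_pos (u * (1 - p)), Real.exp_pos (u * (0 - p)), sq_nonneg u,
    mul_nonneg hp (sub_nonneg.mpr hp1)]

open Classical in
lemma chernoff_tail {n : ℕ} (y c : Fin n → ℝ) (hy : ∀ j, 0 ≤ y j ∧ y j ≤ 1)
    (t : ℝ) (ht : 0 ≤ t) (htc : ∀ j, |t * c j| ≤ 1) (a : ℝ) :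
    ∑ z : Fin n → Bool,
        (if a < (∑ j, c j * (if z j then (1:ℝ) else 0)) - ∑ j, c j * y j
          then ∏ j, (if z j then y j else 1 - y j) else 0)
      ≤ Real.exp (t ^ 2 * (∑ j, (c j) ^ 2) - t * a) := by
  set X : (Fin n → Bool) → ℝ :=
    fun z => (∑ j, c j * (if z j then (1:ℝ) else 0)) - ∑ j, c j * y j with hX
  set w : (Fin n → Bool) → ℝ := fun z => ∏ j, (if z j then y j else 1 - y j) with hw
  have hwnn : ∀ z, 0 ≤ w z := by
    intro z
    apply Finset.prod_nonneg
    intro j _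
    by_cases h : z j <;> simp [h] <;> linarith [(hy j).1, (hy j).2]
  have step1 : ∀ z : Fin n → Bool,
      (if a < X z then w z else 0) ≤ w z * Real.exp (t * (X z - a)) := by
    intro z
    by_cases h : a < X z
    · simp only [h, if_true]
      nth_rewrite 1 [← mul_one (w z)]
      apply mul_le_mul_of_nonneg_left _ (hwnn z)
      exact Real.one_le_exp (by nlinarith)
    · simp only [h, if_false]
      exact mul_nonneg (hwnn z) (Real.exp_pos _).le
  calc ∑ z : Fin n → Bool, (if a < X z then w z else 0)
      ≤ ∑ z : Fin n → Bool, w z * Real.exp (t * (X z - a)) :=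
        Finset.sum_le_sum fun z _ => step1 z
    _ = Real.exp (-(t * a)) * ∑ z : Fin n → Bool, w z * Real.exp (t * X z) := by
        rw [Finset.mul_sum]
        apply Finset.sum_congr rfl
        intro z _
        rw [show t * (X z - a) = t * X z + -(t * a) by ring, Real.exp_add]
        ring
    _ = Real.exp (-(t * a)) * ∑ z : Fin n → Bool,
          ∏ j, ((if z j then y j else 1 - y j) *
            Real.exp (t * (c j * ((if z j then (1:ℝ) else 0) - y j)))) := by
        congr 1
        apply Finset.sum_congr rfl
        intro z _
        rw [Finset.prod_mul_distrib, ← Real.exp_sum]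
        congr 1
        simp only [hX]
        rw [← Finset.sum_sub_distrib, Finset.mul_sum]
        congr 1
        apply Finset.sum_congr rfl
        intro j _
        ring
    _ = Real.exp (-(t * a)) * ∏ j, ∑ b : Bool,
          ((if b then y j else 1 - y j) *
            Real.exp (t * (c j * ((if b then (1:ℝ) else 0) - y j)))) := by
        rw [Fintype.prod_sum]
    _ ≤ Real.exp (-(t * a)) * ∏ j, Real.exp ((t * c j) ^ 2) := by
        apply mul_le_mul_of_nonneg_left _ (Real.exp_pos _).le
        apply Finset.prod_le_prod
        · intro j _
          apply Finset.sum_nonneg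
          intro b _
          cases b <;> norm_num <;>
            first
              | exact mul_nonneg (hy j).1 (Real.exp_pos _).le
              | exact mul_nonneg (by linarith [(hy j).2]) (Real.exp_pos _).le
              | positivity
        · intro j _
          have := bernoulli_mgf (hy j).1 (hy j).2 (htc j)
          calc ∑ b : Bool, ((if b then y j else 1 - y j) *
                Real.exp (t * (c j * ((if b then (1:ℝ) else 0) - y j))))
              = y j * Real.exp ((t * c j) * (1 - y j)) +
                (1 - y j) * Real.exp ((t * c j) * (0 - y j)) := by
                rw [Fintype.sum_bool]
                norm_num
                ring_nf
            _ ≤ Real.exp ((t * c j) ^ 2) := this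
    _ = Real.exp (t ^ 2 * (∑ j, (c j) ^ 2) - t * a) := by
        rw [← Real.exp_sum, ← Real.exp_add]
        congr 1
        rw [Finset.mul_sum]
        ring_nf

lemma sum_weights {n : ℕ} (y : Fin n → ℝ) :
    ∑ z : Fin n → Bool, ∏ j, (if z j then y j else (1:ℝ) - y j) = 1 := by
  have h := Fintype.prod_sum (fun (j : Fin n) (b : Bool) => if b then y j else (1:ℝ) - y j)
  rw [← h]
  apply Finset.prod_eq_one
  intro j _
  rw [Fintype.sum_bool]
  norm_num


open Classical in
/-- Rounding lemma (general, signed coefficients): if z is obtained from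
    y ∈ [0,1]^n by independent randomized rounding, then
    ρ̂ − α·ρ̄ − 2α n^{q+δ} ≤ ρ ≤ ρ̂ + α·ρ̄ + 2α n^{q+δ}
    holds with probability at least 1 − 4/n^{k+1}, where ρ = Σ_j ρ_j z_j,
    ρ̂ = Σ_j ρ_j y_j and ρ̄ = Σ_j |ρ_j|. -/
theorem rounding_lemma_general (n k q : ℕ) (δ β α : ℝ)
    (hn : 2 ≤ n) (hδ : 0 < δ) (hk : 1 ≤ k) (hβ : 1 ≤ β) (hα : 0 < α) (hα' : α < 1)
    (hcond : 3 * ((k : ℝ) + 1) * ((q : ℝ) + 1) * β / α ^ 3 ≤ (n : ℝ) ^ δ / Real.log n)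
    (y : Fin n → ℝ) (hy : ∀ j, 0 ≤ y j ∧ y j ≤ 1)
    (ρc : Fin n → ℝ) (hρc : ∀ j, |ρc j| ≤ ((q : ℝ) + 1) * β * (n : ℝ) ^ q) :
    (1 : ℝ) - 4 / (n : ℝ) ^ (k + 1) ≤
      ∑ z : Fin n → Bool,
        (if (∑ j, ρc j * y j) - α * (∑ j, |ρc j|) - 2 * α * (n : ℝ) ^ ((q : ℝ) + δ) ≤
              (∑ j, ρc j * (if z j then (1 : ℝ) else 0)) ∧
            (∑ j, ρc j * (if z j then (1 : ℝ) else 0)) ≤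
              (∑ j, ρc j * y j) + α * (∑ j, |ρc j|) + 2 * α * (n : ℝ) ^ ((q : ℝ) + δ)
          then ∏ j, (if z j then y j else 1 - y j) else 0) := by

  have hn1 : (1 : ℝ) < (n : ℝ) := by exact_mod_cast Nat.lt_of_lt_of_le one_lt_two hn
  have hn0 : (0 : ℝ) < (n : ℝ) := by linarith
  have hln : 0 < Real.log n := Real.log_pos hn1
  set M : ℝ := ((q : ℝ) + 1) * β * (n : ℝ) ^ q with hM
  have hnq1 : (1 : ℝ) ≤ (n : ℝ) ^ q := one_le_pow₀ hn1.le
  have hq1 : (1 : ℝ) ≤ (q : ℝ) + 1 := by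
    have : (0:ℝ) ≤ (q:ℝ) := Nat.cast_nonneg q
    linarith
  have hM1 : (1 : ℝ) ≤ M := by
    calc (1:ℝ) = 1 * 1 * 1 := by ring
      _ ≤ ((q : ℝ) + 1) * β * (n : ℝ) ^ q := by
          apply mul_le_mul (mul_le_mul hq1 hβ zero_le_one (by positivity)) hnq1 zero_le_one
          positivity
  have hM0 : (0 : ℝ) < M := by linarith
  set t : ℝ := α / M with hT
  have ht : 0 ≤ t := by positivity
  -- t * |c j| ≤ 1 for c = ρc and c = -ρc
  have htc : ∀ j, |t * ρc j| ≤ 1 := by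
    intro j
    rw [abs_mul, abs_of_nonneg ht]
    calc t * |ρc j| ≤ (α / M) * M := by
          apply mul_le_mul_of_nonneg_left (hρc j) ht
      _ = α := by field_simp
      _ ≤ 1 := hα'.le
  have htc' : ∀ j, |t * (-ρc j)| ≤ 1 := by
    intro j
    rw [mul_neg, abs_neg]
    exact htc j
  set ρbar : ℝ := ∑ j, |ρc j| with hbar
  have hbar0 : 0 ≤ ρbar := Finset.sum_nonneg fun j _ => abs_nonneg _
  set N : ℝ := (n : ℝ) ^ ((q : ℝ) + δ) with hNd
  have hNsplit : N = (n : ℝ) ^ q * (n : ℝ) ^ δ := by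
    rw [hNd, Real.rpow_add hn0, Real.rpow_natCast]
  set a : ℝ := α * ρbar + 2 * α * N with ha
  -- variance bound
  have hS : ∑ j, (ρc j) ^ 2 ≤ ρbar * M := by
    rw [hbar, Finset.sum_mul]
    apply Finset.sum_le_sum
    intro j _
    calc (ρc j) ^ 2 = |ρc j| * |ρc j| := by rw [← abs_mul, abs_mul_self]; ring
      _ ≤ |ρc j| * M := mul_le_mul_of_nonneg_left (hρc j) (abs_nonneg _)
  -- exponent bound
  have hexp : t ^ 2 * (∑ j, (ρc j) ^ 2) - t * a ≤ -(((k:ℝ) + 1) * Real.log n) := by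
    have h1 : t ^ 2 * (∑ j, (ρc j) ^ 2) ≤ α ^ 2 * ρbar / M := by
      calc t ^ 2 * (∑ j, (ρc j) ^ 2) ≤ t ^ 2 * (ρbar * M) := by
            apply mul_le_mul_of_nonneg_left hS (by positivity)
        _ = α ^ 2 * ρbar / M := by rw [hT]; field_simp
    have h2 : t * a = α ^ 2 * ρbar / M + 2 * α ^ 2 * N / M := by
      rw [hT, ha]; field_simp
    have h3 : 2 * α ^ 2 * N / M = 2 * α ^ 2 * (n : ℝ) ^ δ / (((q : ℝ) + 1) * β) := by
      rw [hNsplit, hM]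
      field_simp
    have hnd0 : (0:ℝ) < (n : ℝ) ^ δ := Real.rpow_pos_of_pos hn0 δ
    have h4 : 3 * ((k:ℝ)+1) * ((q:ℝ)+1) * β * Real.log n ≤ α ^ 3 * (n:ℝ) ^ δ := by
      have := (div_le_div_iff₀ (by positivity : (0:ℝ) < α ^ 3) hln).mp hcond
      linarith
    have h5 : ((k:ℝ) + 1) * Real.log n ≤ 2 * α ^ 2 * (n : ℝ) ^ δ / (((q : ℝ) + 1) * β) := by
      rw [le_div_iff₀ (by positivity)]
      have hα32 : α ^ 3 ≤ α ^ 2 := pow_le_pow_of_le_one hα.le hα'.le (by norm_num)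
      have hk0 : (0:ℝ) ≤ ((k:ℝ) + 1) * Real.log n := by positivity
      nlinarith [mul_nonneg hk0 (mul_nonneg (mul_nonneg (by linarith : (0:ℝ) ≤ (q:ℝ)+1) (by linarith : (0:ℝ) ≤ β)) hln.le)]
    calc t ^ 2 * (∑ j, (ρc j) ^ 2) - t * a
        ≤ α ^ 2 * ρbar / M - (α ^ 2 * ρbar / M + 2 * α ^ 2 * N / M) := by linarith
      _ = -(2 * α ^ 2 * N / M) := by ring
      _ = -(2 * α ^ 2 * (n:ℝ) ^ δ / (((q:ℝ)+1) * β)) := by rw [h3]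
      _ ≤ -(((k:ℝ)+1) * Real.log n) := by linarith
  -- each tail bound
  have hup := chernoff_tail y ρc hy t ht htc a
  have hdn := chernoff_tail y (fun j => -ρc j) hy t ht htc' a
  have hsq : (∑ j, (-ρc j) ^ 2) = ∑ j, (ρc j) ^ 2 := by simp
  rw [hsq] at hdn
  have hEbound : Real.exp (t ^ 2 * (∑ j, (ρc j) ^ 2) - t * a) ≤ 1 / (n:ℝ) ^ (k+1) := by
    have hpow : Real.exp (((k:ℝ)+1) * Real.log n) = (n:ℝ) ^ (k+1) := by
      rw [← Real.rpow_natCast (n:ℝ) (k+1), Real.rpow_def_of_pos hn0]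
      congr 1
      push_cast
      ring
    calc Real.exp (t ^ 2 * (∑ j, (ρc j) ^ 2) - t * a)
        ≤ Real.exp (-(((k:ℝ)+1) * Real.log n)) := Real.exp_le_exp.mpr hexp
      _ = 1 / (n:ℝ) ^ (k+1) := by rw [Real.exp_neg, hpow, one_div]
  -- pointwise splitting of the total mass
  have hwnn : ∀ z : Fin n → Bool, 0 ≤ ∏ j, (if z j then y j else (1:ℝ) - y j) := by
    intro z
    apply Finset.prod_nonneg
    intro j _
    by_cases h : z j <;> simp [h] <;> linarith [(hy j).1, (hy j).2]
  have hsplit : ∀ z : Fin n → Bool,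
      (∏ j, (if z j then y j else (1:ℝ) - y j)) ≤
        (if (∑ j, ρc j * y j) - α * ρbar - 2 * α * N ≤
              (∑ j, ρc j * (if z j then (1 : ℝ) else 0)) ∧
            (∑ j, ρc j * (if z j then (1 : ℝ) else 0)) ≤
              (∑ j, ρc j * y j) + α * ρbar + 2 * α * N
          then ∏ j, (if z j then y j else 1 - y j) else 0)
        + ((if a < (∑ j, ρc j * (if z j then (1:ℝ) else 0)) - ∑ j, ρc j * y j
            then ∏ j, (if z j then y j else 1 - y j) else 0)
          + (if a < (∑ j, -ρc j * (if z j then (1:ℝ) else 0)) - ∑ j, -ρc j * y j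
            then ∏ j, (if z j then y j else 1 - y j) else 0)) := by
    intro z
    have hneg1 : (∑ j, -ρc j * (if z j then (1:ℝ) else 0)) =
        -(∑ j, ρc j * (if z j then (1:ℝ) else 0)) := by
      rw [← Finset.sum_neg_distrib]
      exact Finset.sum_congr rfl fun j _ => by ring
    have hneg2 : (∑ j, -ρc j * y j) = -(∑ j, ρc j * y j) := by
      rw [← Finset.sum_neg_distrib]
      exact Finset.sum_congr rfl fun j _ => by ring
    by_cases hE : (∑ j, ρc j * y j) - α * ρbar - 2 * α * N ≤
        (∑ j, ρc j * (if z j then (1 : ℝ) else 0)) ∧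
        (∑ j, ρc j * (if z j then (1 : ℝ) else 0)) ≤
        (∑ j, ρc j * y j) + α * ρbar + 2 * α * N
    · rw [if_pos hE]
      have i1 : (0:ℝ) ≤ (if a < (∑ j, ρc j * (if z j then (1:ℝ) else 0)) - ∑ j, ρc j * y j
          then ∏ j, (if z j then y j else (1:ℝ) - y j) else 0) := by
        split
        · exact hwnn z
        · exact le_rfl
      have i2 : (0:ℝ) ≤ (if a < (∑ j, -ρc j * (if z j then (1:ℝ) else 0)) - ∑ j, -ρc j * y j
          then ∏ j, (if z j then y j else (1:ℝ) - y j) else 0) := by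
        split
        · exact hwnn z
        · exact le_rfl
      linarith
    · rw [if_neg hE]
      rcases not_and_or.mp hE with h | h
      · push_neg at h
        have : a < (∑ j, -ρc j * (if z j then (1:ℝ) else 0)) - ∑ j, -ρc j * y j := by
          rw [hneg1, hneg2, ha]
          linarith
        rw [if_pos this]
        have i1 : (0:ℝ) ≤ (if a < (∑ j, ρc j * (if z j then (1:ℝ) else 0)) - ∑ j, ρc j * y j
            then ∏ j, (if z j then y j else (1:ℝ) - y j) else 0) := by
          split
          · exact hwnn z
          · exact le_rfl
        linarith [hwnn z]
      · push_neg at h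
        have : a < (∑ j, ρc j * (if z j then (1:ℝ) else 0)) - ∑ j, ρc j * y j := by
          rw [ha]; linarith
        rw [if_pos this]
        have i2 : (0:ℝ) ≤ (if a < (∑ j, -ρc j * (if z j then (1:ℝ) else 0)) - ∑ j, -ρc j * y j
            then ∏ j, (if z j then y j else (1:ℝ) - y j) else 0) := by
          split
          · exact hwnn z
          · exact le_rfl
        linarith [hwnn z]
  -- summing up
  have hones : (1:ℝ) ≤
      (∑ z : Fin n → Bool,
        (if (∑ j, ρc j * y j) - α * ρbar - 2 * α * N ≤
              (∑ j, ρc j * (if z j then (1 : ℝ) else 0)) ∧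
            (∑ j, ρc j * (if z j then (1 : ℝ) else 0)) ≤
              (∑ j, ρc j * y j) + α * ρbar + 2 * α * N
          then ∏ j, (if z j then y j else 1 - y j) else 0))
      + ((∑ z : Fin n → Bool,
          (if a < (∑ j, ρc j * (if z j then (1:ℝ) else 0)) - ∑ j, ρc j * y j
            then ∏ j, (if z j then y j else 1 - y j) else 0))
        + (∑ z : Fin n → Bool,
          (if a < (∑ j, -ρc j * (if z j then (1:ℝ) else 0)) - ∑ j, -ρc j * y j
            then ∏ j, (if z j then y j else 1 - y j) else 0))) := by
    rw [← Finset.sum_add_distrib, ← Finset.sum_add_distrib]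
    calc (1:ℝ) = ∑ z : Fin n → Bool, ∏ j, (if z j then y j else (1:ℝ) - y j) :=
          (sum_weights y).symm
      _ ≤ _ := Finset.sum_le_sum fun z _ => hsplit z
  have hppos : (0:ℝ) < (n:ℝ) ^ (k+1) := by positivity
  have h1p : (0:ℝ) < 1 / (n:ℝ) ^ (k+1) := by positivity
  have h4eq : 4 / (n:ℝ) ^ (k+1) = 4 * (1 / (n:ℝ) ^ (k+1)) := by ring
  linarith [hup.trans hEbound, hdn.trans hEbound, hones]
end

section
/- Let n ≥ 1 and d ≥ 2 be integers, β ≥ 1 and δ ∈ (0,1]. For each ℓ ∈ {0,…,d−1} let c_ℓ : {1,…,n}^{d−ℓ} → ℝ satisfy Σ_{t ∈ {1,…,n}^{d−ℓ}} |c_ℓ(t)| ≤ β·n^{d−1+δ}. Let ρ_ℓ : {1,…,n}^{d−ℓ} → ℝ (for 1 ≤ ℓ ≤ d−2) and ρ̄_ℓ : {1,…,n}^{d−ℓ} → ℝ (for 1 ≤ ℓ ≤ d−1) satisfy: ρ̄_1(t) = Σ_{j=1}^n |c_0(t,j)| for all t ∈ {1,…,n}^{d−1}; for 1 ≤ ℓ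 ≤ d−2, |ρ_ℓ(s)| ≤ |c_ℓ(s)| + ρ̄_ℓ(s) for all s ∈ {1,…,n}^{d−ℓ}, and ρ̄_{ℓ+1}(t) = Σ_{j=1}^n |ρ_ℓ(t,j)| for all t ∈ {1,…,n}^{d−ℓ−1}. Then for every ℓ ∈ {1,…,d−1}: Σ_{t ∈ {1,…,n}^{d−ℓ}} ρ̄_ℓ(t) ≤ ℓ·β·n^{d−1+δ}. -/
set_option maxHeartbeats 1000000

lemma snoc_sum {n k : ℕ} (f : (Fin (k + 1) → Fin n) → ℝ) :
    ∑ s : Fin (k + 1) → Fin n, f s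
      = ∑ t : Fin k → Fin n, ∑ j : Fin n, f (Fin.snoc t j) := by
  rw [show (∑ t : Fin k → Fin n, ∑ j : Fin n, f (Fin.snoc t j))
      = ∑ p : (Fin k → Fin n) × Fin n, f (Fin.snoc p.1 p.2) by
      exact (Fintype.sum_prod_type (f := fun p => f (Fin.snoc p.1 p.2))).symm]
  exact Fintype.sum_equiv ⟨fun s => (Fin.init s, s (Fin.last k)),
    fun p => Fin.snoc p.1 p.2, fun s => by simp, fun p => by simp⟩ _ _
    (fun s => by simp)

/-- Bound on the sums of absolute value estimations for (the decomposition of)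
    a β-smooth δ-bounded degree-d polynomial: at each level ℓ ∈ {1,…,d−1}
    (tuples of length k = d−ℓ) the sum of the absolute value estimations is at
    most ℓ·β·n^{d−1+δ}. -/
theorem abs_value_estimations_bound (n d : ℕ) (hn : 1 ≤ n) (hd : 2 ≤ d)
    (β δ : ℝ) (hβ : 1 ≤ β) (hδ : 0 < δ) (hδ1 : δ ≤ 1)
    (c : (k : ℕ) → (Fin k → Fin n) → ℝ)
    (hc : ∀ k, 1 ≤ k → k ≤ d →
      ∑ t : Fin k → Fin n, |c k t| ≤ β * (n : ℝ) ^ ((d : ℝ) - 1 + δ))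
    (ρ ρbar : (k : ℕ) → (Fin k → Fin n) → ℝ)
    (hbase : ∀ t : Fin (d - 1) → Fin n,
      ρbar (d - 1) t = ∑ j, |c (d - 1 + 1) (Fin.snoc t j)|)
    (hρ : ∀ k, 1 ≤ k → k ≤ d - 2 → ∀ s : Fin (k + 1) → Fin n,
      |ρ (k + 1) s| ≤ |c (k + 1) s| + ρbar (k + 1) s)
    (hrec : ∀ k, 1 ≤ k → k ≤ d - 2 → ∀ t : Fin k → Fin n,
      ρbar k t = ∑ j, |ρ (k + 1) (Fin.snoc t j)|) :
    ∀ ℓ, 1 ≤ ℓ → ℓ ≤ d - 1 →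
      ∑ t : Fin (d - ℓ) → Fin n, ρbar (d - ℓ) t ≤
        (ℓ : ℝ) * β * (n : ℝ) ^ ((d : ℝ) - 1 + δ) := by
  intro ℓ hℓ1
  induction ℓ, hℓ1 using Nat.le_induction with
  | base =>
    intro _
    calc ∑ t : Fin (d - 1) → Fin n, ρbar (d - 1) t
        = ∑ t : Fin (d - 1) → Fin n, ∑ j, |c (d - 1 + 1) (Fin.snoc t j)| :=
          Finset.sum_congr rfl fun t _ => hbase t
      _ = ∑ s : Fin (d - 1 + 1) → Fin n, |c (d - 1 + 1) s| :=
          (snoc_sum (fun s => |c (d - 1 + 1) s|)).symm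
      _ ≤ β * (n : ℝ) ^ ((d : ℝ) - 1 + δ) := hc _ (by omega) (by omega)
      _ = (1 : ℕ) * β * (n : ℝ) ^ ((d : ℝ) - 1 + δ) := by push_cast; ring
  | succ ℓ hℓ1 IH =>
    intro hℓ
    have hk : d - (ℓ + 1) + 1 = d - ℓ := by omega
    have h1 : 1 ≤ d - (ℓ + 1) := by omega
    have h2 : d - (ℓ + 1) ≤ d - 2 := by omega
    have IH' := IH (by omega)
    rw [← hk] at IH'
    calc ∑ t : Fin (d - (ℓ + 1)) → Fin n, ρbar (d - (ℓ + 1)) t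
        = ∑ t : Fin (d - (ℓ + 1)) → Fin n, ∑ j,
            |ρ (d - (ℓ + 1) + 1) (Fin.snoc t j)| :=
          Finset.sum_congr rfl fun t _ => hrec _ h1 h2 t
      _ = ∑ s : Fin (d - (ℓ + 1) + 1) → Fin n, |ρ (d - (ℓ + 1) + 1) s| :=
          (snoc_sum (fun s => |ρ (d - (ℓ + 1) + 1) s|)).symm
      _ ≤ ∑ s : Fin (d - (ℓ + 1) + 1) → Fin n,
            (|c (d - (ℓ + 1) + 1) s| + ρbar (d - (ℓ + 1) + 1) s) :=
          Finset.sum_le_sum fun s _ => hρ _ h1 h2 s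
      _ = (∑ s : Fin (d - (ℓ + 1) + 1) → Fin n, |c (d - (ℓ + 1) + 1) s|)
            + ∑ s : Fin (d - (ℓ + 1) + 1) → Fin n, ρbar (d - (ℓ + 1) + 1) s :=
          Finset.sum_add_distrib
      _ ≤ β * (n : ℝ) ^ ((d : ℝ) - 1 + δ)
            + (ℓ : ℝ) * β * (n : ℝ) ^ ((d : ℝ) - 1 + δ) :=
          add_le_add (hc _ (by omega) (by omega)) IH'
      _ = ((ℓ + 1 : ℕ) : ℝ) * β * (n : ℝ) ^ ((d : ℝ) - 1 + δ) := by
          push_cast; ring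
end

section
/- Let n ≥ 1 and d ≥ 2 be integers, β ≥ 1 and δ ∈ (0,1]. For each ℓ ∈ {0,…,d−1} let c_ℓ : {1,…,n}^{d−ℓ} → ℝ satisfy Σ_{t ∈ {1,…,n}^{d−ℓ}} |c_ℓ(t)| ≤ β·n^{d−1+δ}. Let ρ_ℓ, ρ̄_ℓ be as follows: ρ̄_1(t) = Σ_{j=1}^n |c_0(t,j)|; for 1 ≤ ℓ ≤ d−2, |ρ_ℓ(s)| ≤ |c_ℓ(s)| + ρ̄_ℓ(s) for all s ∈ {1,…,n}^{d−ℓ}, and ρ̄_{ℓ+1}(t) = Σ_{j=1}^n |ρ_ℓ(t,j)|. Define the cumulative absolute value estimations by t̄_1 = ρ̄_1 and, for 2 ≤ ℓ ≤ d−1, t̄_ℓ(t) = ρ̄_ℓ(t) + Σ_{j=1}^n t̄_{ℓ−1}(t,j). Then for every ℓ ∈ {1,…,d−1}: Σ_{t ∈ {1,…,n}^{d−ℓ}} t̄_ℓ(t) ≤ (ℓ+1)·ℓ·β·n^{d−1+δ}/2; in particular, Σ_{j=1}^n t̄_{d−1}(j) ≤ d(d−1)·β·n^{d−1+δ}/2.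 -/
set_option maxHeartbeats 1000000

lemma sum_snoc_aux (n k : ℕ) (f : (Fin (k+1) → Fin n) → ℝ) :
    ∑ s : Fin (k+1) → Fin n, f s = ∑ t : Fin k → Fin n, ∑ j, f (Fin.snoc t j) := by
  rw [← (Fin.snocEquiv (fun _ => Fin n)).sum_comp f, Fintype.sum_prod_type]
  rw [Finset.sum_comm]
  rfl



/-- Bound on the sums of cumulative absolute value estimations for (the
    decomposition of) a β-smooth δ-bounded degree-d polynomial: at each level
    ℓ ∈ {1,…,d−1} (tuples of length k = d−ℓ) the sum of the cumulative
    absolute value estimations is at most (ℓ+1)·ℓ·β·n^{d−1+δ}/2; in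
    particular, at the top level Σ_j t̄_{d−1}(j) ≤ d(d−1)·β·n^{d−1+δ}/2. -/
theorem cumulative_abs_value_estimations_bound (n d : ℕ) (hn : 1 ≤ n) (hd : 2 ≤ d)
    (β δ : ℝ) (hβ : 1 ≤ β) (hδ : 0 < δ) (hδ1 : δ ≤ 1)
    (c : (k : ℕ) → (Fin k → Fin n) → ℝ)
    (hc : ∀ k, 1 ≤ k → k ≤ d →
      ∑ t : Fin k → Fin n, |c k t| ≤ β * (n : ℝ) ^ ((d : ℝ) - 1 + δ))
    (ρ ρbar tbar : (k : ℕ) → (Fin k → Fin n) → ℝ)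
    (hbase : ∀ t : Fin (d - 1) → Fin n,
      ρbar (d - 1) t = ∑ j, |c (d - 1 + 1) (Fin.snoc t j)|)
    (hρ : ∀ k, 1 ≤ k → k ≤ d - 2 → ∀ s : Fin (k + 1) → Fin n,
      |ρ (k + 1) s| ≤ |c (k + 1) s| + ρbar (k + 1) s)
    (hrec : ∀ k, 1 ≤ k → k ≤ d - 2 → ∀ t : Fin k → Fin n,
      ρbar k t = ∑ j, |ρ (k + 1) (Fin.snoc t j)|)
    (htbase : ∀ t : Fin (d - 1) → Fin n, tbar (d - 1) t = ρbar (d - 1) t)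
    (htrec : ∀ k, 1 ≤ k → k ≤ d - 2 → ∀ t : Fin k → Fin n,
      tbar k t = ρbar k t + ∑ j, tbar (k + 1) (Fin.snoc t j)) :
    (∀ ℓ, 1 ≤ ℓ → ℓ ≤ d - 1 →
      ∑ t : Fin (d - ℓ) → Fin n, tbar (d - ℓ) t ≤
        ((ℓ : ℝ) + 1) * (ℓ : ℝ) * β * (n : ℝ) ^ ((d : ℝ) - 1 + δ) / 2) ∧
    ∑ j : Fin n, tbar 1 (fun _ => j) ≤
      (d : ℝ) * ((d : ℝ) - 1) * β * (n : ℝ) ^ ((d : ℝ) - 1 + δ) / 2 := by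
  set B : ℝ := β * (n : ℝ) ^ ((d : ℝ) - 1 + δ) with hB
  have hB0 : 0 ≤ B := by
    apply mul_nonneg (by linarith)
    positivity
  -- bound on sums of ρbar
  have Sbound : ∀ ℓ, 1 ≤ ℓ → ℓ ≤ d - 1 →
      ∑ t : Fin (d - ℓ) → Fin n, ρbar (d - ℓ) t ≤ (ℓ : ℝ) * B := by
    intro ℓ hℓ0
    induction ℓ, hℓ0 using Nat.le_induction with
    | base =>
      intro _
      calc ∑ t : Fin (d - 1) → Fin n, ρbar (d - 1) t
          = ∑ t : Fin (d - 1) → Fin n, ∑ j, |c (d - 1 + 1) (Fin.snoc t j)| := by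
            exact Finset.sum_congr rfl fun t _ => hbase t
        _ = ∑ s : Fin (d - 1 + 1) → Fin n, |c (d - 1 + 1) s| :=
            (sum_snoc_aux n (d - 1) (fun s => |c (d - 1 + 1) s|)).symm
        _ ≤ B := hc _ (by omega) (by omega)
        _ = ((1 : ℕ) : ℝ) * B := by norm_num
    | succ ℓ hℓ ih =>
      intro hℓ1
      have hk1 : 1 ≤ d - (ℓ + 1) := by omega
      have hk2 : d - (ℓ + 1) ≤ d - 2 := by omega
      have hksucc : d - (ℓ + 1) + 1 = d - ℓ := by omega
      set k := d - (ℓ + 1) with hk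
      have step1 : ∑ t : Fin k → Fin n, ρbar k t
          = ∑ s : Fin (k + 1) → Fin n, |ρ (k + 1) s| := by
        rw [sum_snoc_aux n k fun s => |ρ (k + 1) s|]
        exact Finset.sum_congr rfl fun t _ => hrec k hk1 hk2 t
      have step2 : ∑ s : Fin (k + 1) → Fin n, |ρ (k + 1) s|
          ≤ ∑ s : Fin (k + 1) → Fin n, |c (k + 1) s|
            + ∑ s : Fin (k + 1) → Fin n, ρbar (k + 1) s := by
        rw [← Finset.sum_add_distrib]
        exact Finset.sum_le_sum fun s _ => hρ k hk1 hk2 s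
      have step3 : ∑ s : Fin (k + 1) → Fin n, |c (k + 1) s| ≤ B :=
        hc _ (by omega) (by omega)
      have step4 : ∑ s : Fin (k + 1) → Fin n, ρbar (k + 1) s ≤ (ℓ : ℝ) * B := by
        rw [hk, hksucc]
        exact ih (by omega)
      calc ∑ t : Fin k → Fin n, ρbar k t ≤ B + (ℓ : ℝ) * B := by
            rw [step1]; linarith
        _ = ((ℓ : ℕ) + 1 : ℕ) * B := by push_cast; ring
  -- bound on sums of tbar
  have Tbound : ∀ ℓ, 1 ≤ ℓ → ℓ ≤ d - 1 →
      ∑ t : Fin (d - ℓ) → Fin n, tbar (d - ℓ) t ≤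
        ((ℓ : ℝ) + 1) * (ℓ : ℝ) * B / 2 := by
    intro ℓ hℓ0
    induction ℓ, hℓ0 using Nat.le_induction with
    | base =>
      intro _
      have : ∑ t : Fin (d - 1) → Fin n, tbar (d - 1) t
          = ∑ t : Fin (d - 1) → Fin n, ρbar (d - 1) t :=
        Finset.sum_congr rfl fun t _ => htbase t
      rw [this]
      have := Sbound 1 le_rfl (by omega)
      push_cast at this ⊢
      linarith
    | succ ℓ hℓ ih =>
      intro hℓ1
      have hk1 : 1 ≤ d - (ℓ + 1) := by omega
      have hk2 : d - (ℓ + 1) ≤ d - 2 := by omega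
      have hksucc : d - (ℓ + 1) + 1 = d - ℓ := by omega
      set k := d - (ℓ + 1) with hk
      have step1 : ∑ t : Fin k → Fin n, tbar k t
          = ∑ t : Fin k → Fin n, ρbar k t
            + ∑ s : Fin (k + 1) → Fin n, tbar (k + 1) s := by
        rw [sum_snoc_aux n k fun s => tbar (k + 1) s, ← Finset.sum_add_distrib]
        exact Finset.sum_congr rfl fun t _ => htrec k hk1 hk2 t
      have step2 : ∑ t : Fin k → Fin n, ρbar k t ≤ ((ℓ : ℝ) + 1) * B := by
        have := Sbound (ℓ + 1) (by omega) hℓ1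
        push_cast at this
        rw [hk]
        linarith
      have step3 : ∑ s : Fin (k + 1) → Fin n, tbar (k + 1) s ≤
          ((ℓ : ℝ) + 1) * (ℓ : ℝ) * B / 2 := by
        rw [hk, hksucc]
        exact ih (by omega)
      rw [step1]
      push_cast
      nlinarith [step2, step3]
  refine ⟨fun ℓ ha hb => ?_, ?_⟩
  · have := Tbound ℓ ha hb
    rw [hB] at this
    linarith
  have h1 : d - (d - 1) = 1 := by omega
  have := Tbound (d - 1) (by omega) le_rfl
  rw [h1] at this
  have heq : ∑ t : Fin 1 → Fin n, tbar 1 t = ∑ j : Fin n, tbar 1 (fun _ => j) := by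
    apply Fintype.sum_equiv (Equiv.funUnique (Fin 1) (Fin n))
    intro t
    congr 1
    exact funext fun i => congrArg t (Subsingleton.elim _ _)
  rw [heq] at this
  have hdc : ((d - 1 : ℕ) : ℝ) = (d : ℝ) - 1 := by
    push_cast [Nat.cast_sub (by omega : 1 ≤ d)]; ring
  rw [hdc] at this
  rw [hB] at this
  nlinarith [this]
end

section
/- Let G be a graph with vertex set {1,…,n}, let δ ∈ (0,1], ε1 ∈ (0,1) and ε2 > 0, and assume 4 ≤ ε2·n^{1+δ/3}. Let ρ_1,…,ρ_n be nonnegative reals, let y ∈ [0,1]^n, and suppose z ∈ {0,1}^n satisfies, for every vertex j, (1−ε1)²·ρ_j − 2·ε2·n^{δ/3} ≤ Σ_{i∈N(j)} z_i ≤ (1+ε1)²·ρ_j + 2·ε2·n^{δ/3}, and |Σ_{j=1}^n z_j·ρ_j − Σ_{j=1}^n y_j·ρ_j| ≤ 1. Define p(z) = Σ_{j=1}^n z_j·Σ_{i∈N(j)} z_i. Then (1−ε1)²·Σ_{j=1}^n y_j·ρ_j − 3·ε2·n^{1+δ/3} ≤ p(z) ≤ (1+ε1)²·Σ_{j=1}^n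 y_j·ρ_j + 3·ε2·n^{1+δ/3}. -/
open Classical in
/-- Densest-k-subgraph rounding: the value p(z) of the rounded solution z is
    within multiplicative (1±ε1)² and additive 3ε2·n^{1+δ/3} of the LP
    objective value of the fractional solution y. -/
theorem densest_rounded_value (n : ℕ) (G : SimpleGraph (Fin n)) (δ ε1 ε2 : ℝ)
    (hδ : 0 < δ) (hδ1 : δ ≤ 1) (hε1 : 0 < ε1) (hε1' : ε1 < 1) (hε2 : 0 < ε2)
    (hn : 4 ≤ ε2 * (n : ℝ) ^ (1 + δ / 3))
    (ρ : Fin n → ℝ) (hρ : ∀ j, 0 ≤ ρ j)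
    (y : Fin n → ℝ) (hy : ∀ j, 0 ≤ y j ∧ y j ≤ 1)
    (z : Fin n → ℝ) (hz01 : ∀ j, z j = 0 ∨ z j = 1)
    (hzcon : ∀ j,
      (1 - ε1) ^ 2 * ρ j - 2 * ε2 * (n : ℝ) ^ (δ / 3) ≤
        ∑ i ∈ G.neighborFinset j, z i ∧
      ∑ i ∈ G.neighborFinset j, z i ≤
        (1 + ε1) ^ 2 * ρ j + 2 * ε2 * (n : ℝ) ^ (δ / 3))
    (hclose : |(∑ j, z j * ρ j) - ∑ j, y j * ρ j| ≤ 1) :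
    (1 - ε1) ^ 2 * (∑ j, y j * ρ j) - 3 * ε2 * (n : ℝ) ^ (1 + δ / 3) ≤
        ∑ j, z j * ∑ i ∈ G.neighborFinset j, z i ∧
      ∑ j, z j * ∑ i ∈ G.neighborFinset j, z i ≤
        (1 + ε1) ^ 2 * (∑ j, y j * ρ j) + 3 * ε2 * (n : ℝ) ^ (1 + δ / 3) := by

  have hz0 : ∀ j, 0 ≤ z j := fun j => by rcases hz01 j with h | h <;> simp [h]
  have hz1 : ∀ j, z j ≤ 1 := fun j => by rcases hz01 j with h | h <;> simp [h]
  set S := ∑ j, y j * ρ j with hS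
  set T := ∑ j, z j * ρ j with hT
  have hnpos : (0:ℝ) < n := by
    by_contra h
    push_neg at h
    have : (n:ℝ) = 0 := le_antisymm h (Nat.cast_nonneg n)
    rw [this, Real.zero_rpow (by positivity)] at hn
    linarith
  have hsplit : (n : ℝ) ^ (1 + δ / 3) = n * (n : ℝ) ^ (δ / 3) := by
    rw [Real.rpow_add hnpos, Real.rpow_one]
  have hNpos : (0:ℝ) < (n:ℝ) ^ (δ/3) := Real.rpow_pos_of_pos hnpos _
  have hsumz : ∑ j, z j ≤ (n : ℝ) := by
    calc ∑ j, z j ≤ ∑ _j : Fin n, (1:ℝ) := Finset.sum_le_sum (fun j _ => hz1 j)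
    _ = n := by simp
  have hsumz0 : (0:ℝ) ≤ ∑ j, z j := Finset.sum_nonneg (fun j _ => hz0 j)
  have habs := abs_le.mp hclose
  have hTlow : S - 1 ≤ T := by linarith [habs.1]
  have hThigh : T ≤ S + 1 := by linarith [habs.2]
  have hbig : (4:ℝ) ≤ ε2 * (n : ℝ) ^ (1 + δ / 3) := hn
  constructor
  · have h1 : ∑ j, z j * ((1 - ε1) ^ 2 * ρ j - 2 * ε2 * (n : ℝ) ^ (δ / 3)) ≤
        ∑ j, z j * ∑ i ∈ G.neighborFinset j, z i :=
      Finset.sum_le_sum (fun j _ => mul_le_mul_of_nonneg_left (hzcon j).1 (hz0 j))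
    have h2 : ∑ j, z j * ((1 - ε1) ^ 2 * ρ j - 2 * ε2 * (n : ℝ) ^ (δ / 3)) =
        (1 - ε1) ^ 2 * T - 2 * ε2 * (n : ℝ) ^ (δ / 3) * ∑ j, z j := by
      rw [Finset.mul_sum, Finset.mul_sum, ← Finset.sum_sub_distrib]
      exact Finset.sum_congr rfl (fun j _ => by ring)
    have h3 : 2 * ε2 * (n : ℝ) ^ (δ / 3) * ∑ j, z j ≤ 2 * ε2 * (n : ℝ) ^ (1 + δ/3) := by
      rw [hsplit]
      have h := mul_le_mul_of_nonneg_left hsumz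
        (show (0:ℝ) ≤ 2 * ε2 * (n:ℝ) ^ (δ/3) by positivity)
      linarith
    have h4 : (1 - ε1) ^ 2 * (S - 1) ≤ (1 - ε1) ^ 2 * T :=
      mul_le_mul_of_nonneg_left hTlow (by positivity)
    have h5 : (1 - ε1) ^ 2 ≤ ε2 * (n : ℝ) ^ (1 + δ/3) := by nlinarith
    linarith
  · have h1 : ∑ j, z j * ∑ i ∈ G.neighborFinset j, z i ≤
        ∑ j, z j * ((1 + ε1) ^ 2 * ρ j + 2 * ε2 * (n : ℝ) ^ (δ / 3)) :=
      Finset.sum_le_sum (fun j _ => mul_le_mul_of_nonneg_left (hzcon j).2 (hz0 j))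
    have h2 : ∑ j, z j * ((1 + ε1) ^ 2 * ρ j + 2 * ε2 * (n : ℝ) ^ (δ / 3)) =
        (1 + ε1) ^ 2 * T + 2 * ε2 * (n : ℝ) ^ (δ / 3) * ∑ j, z j := by
      rw [Finset.mul_sum, Finset.mul_sum, ← Finset.sum_add_distrib]
      exact Finset.sum_congr rfl (fun j _ => by ring)
    have h3 : 2 * ε2 * (n : ℝ) ^ (δ / 3) * ∑ j, z j ≤ 2 * ε2 * (n : ℝ) ^ (1 + δ/3) := by
      rw [hsplit]
      have h := mul_le_mul_of_nonneg_left hsumz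
        (show (0:ℝ) ≤ 2 * ε2 * (n:ℝ) ^ (δ/3) by positivity)
      linarith
    have h4 : (1 + ε1) ^ 2 * T ≤ (1 + ε1) ^ 2 * (S + 1) :=
      mul_le_mul_of_nonneg_left hThigh (by positivity)
    have h5 : (1 + ε1) ^ 2 ≤ ε2 * (n : ℝ) ^ (1 + δ/3) := by nlinarith
    linarith
end

section
/- Let G = (V, E) be a 5-regular simple graph with |V| = n and let Δ ≥ 1 be an integer. Define the graph G' with vertex set {u_i : u ∈ V, 1 ≤ i ≤ Δ} ∪ {c^u_j : u ∈ V, 1 ≤ j ≤ 5Δ} and edge set consisting of: all pairs {u_i, v_j} with {u,v} ∈ E, 1 ≤ i ≤ Δ, 1 ≤ j ≤ Δ; and all pairs {u_i, c^u_j} with u ∈ V, 1 ≤ i ≤ Δ, 1 ≤ j ≤ 5Δ. Then the maximum cut of G' satisfies MaxCut(G') = Δ²·MaxCut(G) + 5·Δ²·n. -/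
open Classical

/-- The number of edges of `H` crossing the cut `(S, Sᶜ)`: every crossing edge
    is counted exactly once, as the ordered pair with its `S`-endpoint first. -/
noncomputable def cutSize {W : Type*} [Fintype W] (H : SimpleGraph W) (S : Finset W) : ℕ :=
  (Finset.univ.filter fun p : W × W => H.Adj p.1 p.2 ∧ p.1 ∈ S ∧ p.2 ∉ S).card

/-- The maximum, over all bipartitions of the vertex set, of the number of
    crossing edges. -/
noncomputable def maxCut {W : Type*} [Fintype W] (H : SimpleGraph W) : ℕ :=
  Finset.univ.sup fun S : Finset W => cutSize H S

section Blowup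

open Finset

variable {V : Type*} [Fintype V]

noncomputable def adjPairs (G : SimpleGraph V) : Finset (V × V) :=
  Finset.univ.filter (fun p : V × V => G.Adj p.1 p.2)

noncomputable def Fz (G : SimpleGraph V) (Δ : ℕ) (a : V → ℕ) : ℤ :=
  ∑ p ∈ adjPairs G, (a p.1 : ℤ) * ((Δ : ℤ) - a p.2)

lemma Fz_boundary (G : SimpleGraph V) (Δ : ℕ) (a : V → ℕ)
    (ha : ∀ u, a u = 0 ∨ a u = Δ) :
    Fz G Δ a ≤ (Δ : ℤ)^2 * maxCut G := by
  classical
  set S : Finset V := Finset.univ.filter (fun u => a u ≠ 0) with hS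
  have hmem : ∀ u, u ∈ S ↔ a u ≠ 0 := by intro u; simp [hS]
  have hterm : ∀ p ∈ adjPairs G,
      (a p.1 : ℤ) * ((Δ : ℤ) - a p.2) =
        if p.1 ∈ S ∧ p.2 ∉ S then (Δ : ℤ)^2 else 0 := by
    intro p hp
    by_cases h1 : p.1 ∈ S <;> by_cases h2 : p.2 ∈ S
    · have e1 : a p.1 = Δ := ((ha p.1).resolve_left ((hmem p.1).mp h1))
      have e2 : a p.2 = Δ := ((ha p.2).resolve_left ((hmem p.2).mp h2))
      simp [h1, h2, e1, e2]
    · have e1 : a p.1 = Δ := ((ha p.1).resolve_left ((hmem p.1).mp h1))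
      have e2 : a p.2 = 0 := by_contra fun h => h2 ((hmem p.2).mpr h)
      simp [h1, h2, e1, e2]; ring
    · have e1 : a p.1 = 0 := by_contra fun h => h1 ((hmem p.1).mpr h)
      simp [h1, h2, e1]
    · have e1 : a p.1 = 0 := by_contra fun h => h1 ((hmem p.1).mpr h)
      simp [h1, h2, e1]
  rw [Fz, Finset.sum_congr rfl hterm, Finset.sum_ite, Finset.sum_const, Finset.sum_const]
  simp only [smul_eq_mul, mul_zero, add_zero, nsmul_eq_mul]
  have hcut : (adjPairs G).filter (fun p => p.1 ∈ S ∧ p.2 ∉ S) =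
      Finset.univ.filter fun p : V × V => G.Adj p.1 p.2 ∧ p.1 ∈ S ∧ p.2 ∉ S := by
    rw [adjPairs, Finset.filter_filter]
  rw [hcut]
  have hle : cutSize G S ≤ maxCut G := Finset.le_sup (Finset.mem_univ S)
  have hle' : ((Finset.univ.filter fun p : V × V => G.Adj p.1 p.2 ∧ p.1 ∈ S ∧ p.2 ∉ S).card : ℤ)
      ≤ (maxCut G : ℤ) := by exact_mod_cast hle
  calc ((Finset.univ.filter fun p : V × V => G.Adj p.1 p.2 ∧ p.1 ∈ S ∧ p.2 ∉ S).card : ℤ) * (Δ:ℤ)^2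
      ≤ (maxCut G : ℤ) * (Δ:ℤ)^2 := by
        apply mul_le_mul_of_nonneg_right hle' (by positivity)
    _ = (Δ:ℤ)^2 * maxCut G := by ring

lemma Fz_affine (G : SimpleGraph V) (Δ : ℕ) (a : V → ℕ) (u0 : V) (t : ℕ) :
    (Δ : ℤ) * Fz G Δ (Function.update a u0 t) =
      ((Δ : ℤ) - t) * Fz G Δ (Function.update a u0 0) + t * Fz G Δ (Function.update a u0 Δ) := by
  simp only [Fz, Finset.mul_sum, ← Finset.sum_add_distrib]
  refine Finset.sum_congr rfl ?_
  intro p hp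
  have hadj : G.Adj p.1 p.2 := (Finset.mem_filter.mp hp).2
  have hne : p.1 ≠ p.2 := hadj.ne
  by_cases h1 : p.1 = u0 <;> by_cases h2 : p.2 = u0
  · exact absurd (h1.trans h2.symm) hne
  all_goals simp [Function.update_apply, h1, h2]; ring

lemma Fz_le_aux (G : SimpleGraph V) (Δ : ℕ) (hΔ : 1 ≤ Δ) :
    ∀ k (a : V → ℕ), (∀ u, a u ≤ Δ) →
      (Finset.univ.filter fun u => a u ≠ 0 ∧ a u ≠ Δ).card ≤ k →
      Fz G Δ a ≤ (Δ : ℤ)^2 * maxCut G := by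
  intro k
  induction k with
  | zero =>
    intro a ha hcard
    apply Fz_boundary
    intro u
    by_contra h
    push_neg at h
    have hmem : u ∈ Finset.univ.filter fun u => a u ≠ 0 ∧ a u ≠ Δ := by
      simp [h.1, h.2]
    have hc : (Finset.univ.filter fun u => a u ≠ 0 ∧ a u ≠ Δ).card = 0 := Nat.le_zero.mp hcard
    rw [Finset.card_eq_zero] at hc
    rw [hc] at hmem
    simp at hmem
  | succ k ih =>
    intro a ha hcard
    by_cases hbd : ∀ u, a u = 0 ∨ a u = Δ
    · exact Fz_boundary G Δ a hbd
    push_neg at hbd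
    obtain ⟨u0, hu0⟩ := hbd
    have h0 : a u0 ≠ 0 := hu0.1
    have hD : a u0 ≠ Δ := hu0.2
    have hmemu0 : u0 ∈ Finset.univ.filter fun u => a u ≠ 0 ∧ a u ≠ Δ := by simp [h0, hD]
    have hcard' : ∀ t : ℕ, t = 0 ∨ t = Δ →
        (Finset.univ.filter fun u => Function.update a u0 t u ≠ 0 ∧
          Function.update a u0 t u ≠ Δ).card ≤ k := by
      intro t ht
      have hsub : (Finset.univ.filter fun u => Function.update a u0 t u ≠ 0 ∧
          Function.update a u0 t u ≠ Δ) ⊆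
          (Finset.univ.filter fun u => a u ≠ 0 ∧ a u ≠ Δ).erase u0 := by
        intro u hu
        simp only [Finset.mem_filter, Finset.mem_univ, true_and] at hu
        rcases eq_or_ne u u0 with rfl | hne
        · rw [Function.update_self] at hu
          rcases ht with rfl | rfl
          · exact absurd rfl hu.1
          · exact absurd rfl hu.2
        · rw [Function.update_of_ne hne] at hu
          exact Finset.mem_erase.mpr ⟨hne, by simp [hu.1, hu.2]⟩
      have hcc := Finset.card_le_card hsub
      rw [Finset.card_erase_of_mem hmemu0] at hcc
      omega
    have hbound : ∀ t : ℕ, t ≤ Δ → ∀ u, Function.update a u0 t u ≤ Δ := fun t ht u => by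
      rw [Function.update_apply]; split <;> [exact ht; exact ha u]
    have hF0 : Fz G Δ (Function.update a u0 0) ≤ (Δ : ℤ)^2 * maxCut G :=
      ih _ (hbound 0 (Nat.zero_le _)) (hcard' 0 (Or.inl rfl))
    have hFD : Fz G Δ (Function.update a u0 Δ) ≤ (Δ : ℤ)^2 * maxCut G :=
      ih _ (hbound Δ le_rfl) (hcard' Δ (Or.inr rfl))
    have key := Fz_affine G Δ a u0 (a u0)
    rw [Function.update_eq_self] at key
    have ht1 : (0 : ℤ) ≤ (a u0 : ℤ) := Int.ofNat_nonneg _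
    have ht2 : (a u0 : ℤ) ≤ (Δ : ℤ) := by exact_mod_cast ha u0
    have hΔpos : (0 : ℤ) < (Δ : ℤ) := by exact_mod_cast hΔ
    nlinarith [mul_le_mul_of_nonneg_left hF0 (by linarith : (0:ℤ) ≤ (Δ:ℤ) - a u0),
      mul_le_mul_of_nonneg_left hFD ht1]

lemma Fz_le (G : SimpleGraph V) (Δ : ℕ) (hΔ : 1 ≤ Δ) (a : V → ℕ) (ha : ∀ u, a u ≤ Δ) :
    Fz G Δ a ≤ (Δ : ℤ)^2 * maxCut G :=
  Fz_le_aux G Δ hΔ _ a ha le_rfl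

noncomputable def blowup (G : SimpleGraph V) (Δ : ℕ) :
    SimpleGraph ((V × Fin Δ) ⊕ (V × Fin (5 * Δ))) :=
  SimpleGraph.fromRel
    (fun a b : (V × Fin Δ) ⊕ (V × Fin (5 * Δ)) =>
      (∃ u i v j, a = Sum.inl (u, i) ∧ b = Sum.inl (v, j) ∧ G.Adj u v) ∨
      (∃ u i j, a = Sum.inl (u, i) ∧ b = Sum.inr (u, j)))

lemma blowup_adj_ll (G : SimpleGraph V) (Δ : ℕ) (u v : V) (i j : Fin Δ) :
    (blowup G Δ).Adj (Sum.inl (u, i)) (Sum.inl (v, j)) ↔ G.Adj u v := by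
  simp only [blowup, SimpleGraph.fromRel_adj]
  constructor
  · rintro ⟨hne, h | h⟩ <;> rcases h with h | h
    · obtain ⟨u', i', v', j', h1, h2, h3⟩ := h
      simp only [Sum.inl.injEq, Prod.mk.injEq] at h1 h2
      rw [h1.1, h2.1]; exact h3
    · obtain ⟨u', i', j', h1, h2⟩ := h; exact absurd h2 (by simp)
    · obtain ⟨u', i', v', j', h1, h2, h3⟩ := h
      simp only [Sum.inl.injEq, Prod.mk.injEq] at h1 h2
      rw [h1.1, h2.1]; exact h3.symm
    · obtain ⟨u', i', j', h1, h2⟩ := h; exact absurd h2 (by simp)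
  · intro h
    refine ⟨by simp [h.ne], Or.inl (Or.inl ⟨u, i, v, j, rfl, rfl, h⟩)⟩

lemma blowup_adj_lr (G : SimpleGraph V) (Δ : ℕ) (u w : V) (i : Fin Δ) (j : Fin (5 * Δ)) :
    (blowup G Δ).Adj (Sum.inl (u, i)) (Sum.inr (w, j)) ↔ u = w := by
  simp only [blowup, SimpleGraph.fromRel_adj]
  constructor
  · rintro ⟨hne, h | h⟩ <;> rcases h with h | h
    · obtain ⟨_, _, _, _, _, h2, _⟩ := h; exact absurd h2 (by simp)
    · obtain ⟨u', i', j', h1, h2⟩ := h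
      simp only [Sum.inl.injEq, Sum.inr.injEq, Prod.mk.injEq] at h1 h2
      rw [h1.1, h2.1]
    · obtain ⟨_, _, _, _, h1, _, _⟩ := h; exact absurd h1 (by simp)
    · obtain ⟨u', i', j', h1, _⟩ := h; exact absurd h1 (by simp)
  · rintro rfl
    exact ⟨by simp, Or.inl (Or.inr ⟨u, i, j, rfl, rfl⟩)⟩

lemma blowup_adj_rl (G : SimpleGraph V) (Δ : ℕ) (u w : V) (i : Fin Δ) (j : Fin (5 * Δ)) :
    (blowup G Δ).Adj (Sum.inr (w, j)) (Sum.inl (u, i)) ↔ u = w :=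
  (blowup G Δ).adj_comm _ _ |>.trans (blowup_adj_lr G Δ u w i j)

lemma blowup_adj_rr (G : SimpleGraph V) (Δ : ℕ) (w w' : V) (j j' : Fin (5 * Δ)) :
    ¬ (blowup G Δ).Adj (Sum.inr (w, j)) (Sum.inr (w', j')) := by
  simp only [blowup, SimpleGraph.fromRel_adj]
  rintro ⟨hne, h | h⟩ <;> rcases h with h | h
  · obtain ⟨_, _, _, _, h1, _, _⟩ := h; exact absurd h1 (by simp)
  · obtain ⟨_, _, _, h1, _⟩ := h; exact absurd h1 (by simp)
  · obtain ⟨_, _, _, _, h1, _, _⟩ := h; exact absurd h1 (by simp)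
  · obtain ⟨_, _, _, h1, _⟩ := h; exact absurd h1 (by simp)

lemma ind_factor {α β : Type*} [Fintype α] [Fintype β] (P : Prop) (Q : α → Prop) (R : β → Prop)
    {iP : Decidable P} {iQ : DecidablePred Q} {iR : DecidablePred R}
    {iPQR : ∀ (i : α) (j : β), Decidable (P ∧ Q i ∧ R j)} :
    (∑ i : α, ∑ j : β, if P ∧ Q i ∧ R j then (1:ℕ) else 0) =
      (if P then 1 else 0) *
        ((Finset.univ.filter fun i => Q i).card * (Finset.univ.filter fun j => R j).card) := by
  by_cases hP : P
  · simp only [hP, true_and, if_true, one_mul]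
    rw [Finset.card_filter, Finset.card_filter, Finset.sum_mul_sum]
    exact Finset.sum_congr rfl fun i _ => Finset.sum_congr rfl fun j _ => by
      by_cases hQ : Q i <;> by_cases hR : R j <;> simp [hQ, hR]
  · simp [hP]

lemma cut_decomp (G : SimpleGraph V) (Δ : ℕ)
    (S : Finset ((V × Fin Δ) ⊕ (V × Fin (5 * Δ)))) :
    cutSize (blowup G Δ) S =
      (∑ p ∈ adjPairs G,
        (Finset.univ.filter fun i : Fin Δ => Sum.inl (p.1, i) ∈ S).card *
        (Finset.univ.filter fun j : Fin Δ => Sum.inl (p.2, j) ∉ S).card)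
      + ∑ u : V,
        ((Finset.univ.filter fun i : Fin Δ => Sum.inl (u, i) ∈ S).card *
         (Finset.univ.filter fun j : Fin (5*Δ) => Sum.inr (u, j) ∉ S).card
         + (Finset.univ.filter fun j : Fin (5*Δ) => Sum.inr (u, j) ∈ S).card *
           (Finset.univ.filter fun i : Fin Δ => Sum.inl (u, i) ∉ S).card) := by
  rw [cutSize, Finset.card_filter]
  rw [Fintype.sum_prod_type]
  simp only [Fintype.sum_sum_type, Fintype.sum_prod_type]
  simp only [blowup_adj_ll, blowup_adj_lr, blowup_adj_rl, blowup_adj_rr,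
    false_and, if_false, Finset.sum_const_zero, add_zero]
  have e1 : ∀ u : V,
      (∑ i : Fin Δ, ∑ v : V, ∑ j : Fin Δ,
        if G.Adj u v ∧ Sum.inl (u, i) ∈ S ∧ Sum.inl (v, j) ∉ S then (1:ℕ) else 0)
      = ∑ v : V, (if G.Adj u v then 1 else 0) *
          ((Finset.univ.filter fun i : Fin Δ => Sum.inl (u, i) ∈ S).card *
           (Finset.univ.filter fun j : Fin Δ => Sum.inl (v, j) ∉ S).card) := by
    intro u
    rw [Finset.sum_comm]
    exact Finset.sum_congr rfl fun v _ => ind_factor (G.Adj u v)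
      (fun i : Fin Δ => Sum.inl (u, i) ∈ S) (fun j : Fin Δ => Sum.inl (v, j) ∉ S)
  have e2 : ∀ u : V,
      (∑ i : Fin Δ, ∑ w : V, ∑ j : Fin (5 * Δ),
        if u = w ∧ Sum.inl (u, i) ∈ S ∧ Sum.inr (w, j) ∉ S then (1:ℕ) else 0)
      = (Finset.univ.filter fun i : Fin Δ => Sum.inl (u, i) ∈ S).card *
        (Finset.univ.filter fun j : Fin (5*Δ) => Sum.inr (u, j) ∉ S).card := by
    intro u
    rw [Finset.sum_comm]
    trans (∑ w : V, (if u = w then (1:ℕ) else 0) *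
        ((Finset.univ.filter fun i : Fin Δ => Sum.inl (u, i) ∈ S).card *
         (Finset.univ.filter fun j : Fin (5*Δ) => Sum.inr (w, j) ∉ S).card))
    · exact Finset.sum_congr rfl fun w _ => ind_factor (u = w)
        (fun i : Fin Δ => Sum.inl (u, i) ∈ S) (fun j : Fin (5*Δ) => Sum.inr (w, j) ∉ S)
    · simp [ite_mul]
  have e3 : ∀ w : V,
      (∑ j : Fin (5 * Δ), ∑ u : V, ∑ i : Fin Δ,
        if u = w ∧ Sum.inr (w, j) ∈ S ∧ Sum.inl (u, i) ∉ S then (1:ℕ) else 0)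
      = (Finset.univ.filter fun j : Fin (5*Δ) => Sum.inr (w, j) ∈ S).card *
        (Finset.univ.filter fun i : Fin Δ => Sum.inl (w, i) ∉ S).card := by
    intro w
    rw [Finset.sum_comm]
    trans (∑ u : V, (if u = w then (1:ℕ) else 0) *
        ((Finset.univ.filter fun j : Fin (5*Δ) => Sum.inr (w, j) ∈ S).card *
         (Finset.univ.filter fun i : Fin Δ => Sum.inl (u, i) ∉ S).card))
    · exact Finset.sum_congr rfl fun u _ => ind_factor (u = w)
        (fun j : Fin (5*Δ) => Sum.inr (w, j) ∈ S) (fun i : Fin Δ => Sum.inl (u, i) ∉ S)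
    · simp [ite_mul]
  simp only [Finset.sum_add_distrib]
  rw [Finset.sum_congr rfl fun u (_ : u ∈ Finset.univ) => e1 u,
      Finset.sum_congr rfl fun u (_ : u ∈ Finset.univ) => e2 u,
      Finset.sum_congr rfl fun w (_ : w ∈ Finset.univ) => e3 w]
  have h1 : (∑ u : V, ∑ v : V, (if G.Adj u v then (1:ℕ) else 0) *
          ((Finset.univ.filter fun i : Fin Δ => Sum.inl (u, i) ∈ S).card *
           (Finset.univ.filter fun j : Fin Δ => Sum.inl (v, j) ∉ S).card))
      = ∑ p ∈ adjPairs G,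
          (Finset.univ.filter fun i : Fin Δ => Sum.inl (p.1, i) ∈ S).card *
          (Finset.univ.filter fun j : Fin Δ => Sum.inl (p.2, j) ∉ S).card := by
    rw [adjPairs, Finset.sum_filter, Fintype.sum_prod_type]
    exact Finset.sum_congr rfl fun u _ => Finset.sum_congr rfl fun v _ => by
      by_cases h : G.Adj u v <;> simp [h]
  rw [h1]
  ring

end Blowup

/-- Blow-up construction for Max-Cut hardness: starting from a 5-regular graph G
    on n vertices, replace each vertex u by Δ copies u_i plus 5Δ consistency
    vertices c^u_j; copies of adjacent vertices are completely joined, and all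
    copies of u are joined to all consistency vertices of u. Then
    MaxCut(G') = Δ²·MaxCut(G) + 5Δ²·n. -/
theorem maxcut_blowup (n Δ : ℕ) (hΔ : 1 ≤ Δ) (V : Type*) [Fintype V]
    (G : SimpleGraph V) (hn : Fintype.card V = n)
    (hreg : ∀ v : V, (G.neighborFinset v).card = 5) :
    maxCut (SimpleGraph.fromRel
      (fun a b : (V × Fin Δ) ⊕ (V × Fin (5 * Δ)) =>
        (∃ u i v j, a = Sum.inl (u, i) ∧ b = Sum.inl (v, j) ∧ G.Adj u v) ∨
        (∃ u i j, a = Sum.inl (u, i) ∧ b = Sum.inr (u, j)))) =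
      Δ ^ 2 * maxCut G + 5 * Δ ^ 2 * n := by
  classical
  show maxCut (blowup G Δ) = Δ ^ 2 * maxCut G + 5 * Δ ^ 2 * n
  have hsumA : ∀ (S : Finset ((V × Fin Δ) ⊕ (V × Fin (5 * Δ)))) (u : V), (Finset.univ.filter fun i : Fin Δ => Sum.inl (u, i) ∈ S).card +
      (Finset.univ.filter fun i : Fin Δ => Sum.inl (u, i) ∉ S).card = Δ := by
    intro S u
    rw [Finset.card_filter_add_card_filter_not]
    simp
  have hsumB : ∀ (S : Finset ((V × Fin Δ) ⊕ (V × Fin (5 * Δ)))) (u : V), (Finset.univ.filter fun j : Fin (5*Δ) => Sum.inr (u, j) ∈ S).card +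
      (Finset.univ.filter fun j : Fin (5*Δ) => Sum.inr (u, j) ∉ S).card = 5 * Δ := by
    intro S u
    rw [Finset.card_filter_add_card_filter_not]
    simp
  apply le_antisymm
  · -- upper bound
    apply Finset.sup_le
    intro S _
    rw [cut_decomp]
    have hA : (∑ p ∈ adjPairs G,
        (Finset.univ.filter fun i : Fin Δ => Sum.inl (p.1, i) ∈ S).card *
        (Finset.univ.filter fun j : Fin Δ => Sum.inl (p.2, j) ∉ S).card)
        ≤ Δ ^ 2 * maxCut G := by
      have hcast : ((∑ p ∈ adjPairs G,
          (Finset.univ.filter fun i : Fin Δ => Sum.inl (p.1, i) ∈ S).card *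
          (Finset.univ.filter fun j : Fin Δ => Sum.inl (p.2, j) ∉ S).card : ℕ) : ℤ)
          = Fz G Δ (fun u => (Finset.univ.filter fun i : Fin Δ => Sum.inl (u, i) ∈ S).card) := by
        rw [Fz]
        beta_reduce
        push_cast
        refine Finset.sum_congr rfl fun p _ => ?_
        have h1 := hsumA S p.2
        have : ((Finset.univ.filter fun j : Fin Δ => Sum.inl (p.2, j) ∉ S).card : ℤ)
            = (Δ : ℤ) - (Finset.univ.filter fun i : Fin Δ => Sum.inl (p.2, i) ∈ S).card := by
          omega
        rw [this]
      have hFz := Fz_le G Δ hΔ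
        (fun u => (Finset.univ.filter fun i : Fin Δ => Sum.inl (u, i) ∈ S).card)
        (fun u => by show (Finset.univ.filter fun i : Fin Δ => Sum.inl (u, i) ∈ S).card ≤ Δ; have := hsumA S u; omega)
      have : ((∑ p ∈ adjPairs G,
          (Finset.univ.filter fun i : Fin Δ => Sum.inl (p.1, i) ∈ S).card *
          (Finset.univ.filter fun j : Fin Δ => Sum.inl (p.2, j) ∉ S).card : ℕ) : ℤ)
          ≤ ((Δ ^ 2 * maxCut G : ℕ) : ℤ) := by
        rw [hcast]; push_cast; exact hFz
      exact_mod_cast this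
    have hB : (∑ u : V,
        ((Finset.univ.filter fun i : Fin Δ => Sum.inl (u, i) ∈ S).card *
         (Finset.univ.filter fun j : Fin (5*Δ) => Sum.inr (u, j) ∉ S).card
         + (Finset.univ.filter fun j : Fin (5*Δ) => Sum.inr (u, j) ∈ S).card *
           (Finset.univ.filter fun i : Fin Δ => Sum.inl (u, i) ∉ S).card))
        ≤ 5 * Δ ^ 2 * n := by
      calc _ ≤ ∑ _u : V, 5 * Δ ^ 2 := by
              apply Finset.sum_le_sum
              intro u _
              have h1 := hsumA S u
              have h2 := hsumB S u
              nlinarith [h1, h2]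
        _ = 5 * Δ ^ 2 * n := by
              rw [Finset.sum_const, Finset.card_univ, hn, smul_eq_mul]; ring
    omega
  · -- lower bound
    obtain ⟨S0, _, hS0⟩ := Finset.exists_mem_eq_sup (Finset.univ : Finset (Finset V))
      ⟨∅, Finset.mem_univ ∅⟩ (fun S => cutSize G S)
    set S' : Finset ((V × Fin Δ) ⊕ (V × Fin (5 * Δ))) :=
      Finset.univ.filter (fun w => Sum.elim (fun p : V × Fin Δ => p.1 ∈ S0)
        (fun p : V × Fin (5*Δ) => p.1 ∉ S0) w) with hS'def
    have hmemA : ∀ (u : V) (i : Fin Δ), Sum.inl (u, i) ∈ S' ↔ u ∈ S0 := by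
      intro u i; simp [hS'def]
    have hmemB : ∀ (u : V) (j : Fin (5*Δ)), Sum.inr (u, j) ∈ S' ↔ u ∉ S0 := by
      intro u j; simp [hS'def]
    have hcA : ∀ u : V, (Finset.univ.filter fun i : Fin Δ => Sum.inl (u, i) ∈ S').card
        = if u ∈ S0 then Δ else 0 := by
      intro u
      by_cases h : u ∈ S0 <;> simp [hmemA, h]
    have hcA' : ∀ u : V, (Finset.univ.filter fun i : Fin Δ => Sum.inl (u, i) ∉ S').card
        = if u ∈ S0 then 0 else Δ := by
      intro u
      by_cases h : u ∈ S0 <;> simp [hmemA, h]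
    have hcB : ∀ u : V, (Finset.univ.filter fun j : Fin (5*Δ) => Sum.inr (u, j) ∈ S').card
        = if u ∈ S0 then 0 else 5 * Δ := by
      intro u
      by_cases h : u ∈ S0 <;> simp [hmemB, h]
    have hcB' : ∀ u : V, (Finset.univ.filter fun j : Fin (5*Δ) => Sum.inr (u, j) ∉ S').card
        = if u ∈ S0 then 5 * Δ else 0 := by
      intro u
      by_cases h : u ∈ S0 <;> simp [hmemB, h]
    have hval : cutSize (blowup G Δ) S' = Δ ^ 2 * maxCut G + 5 * Δ ^ 2 * n := by
      rw [cut_decomp]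
      have hfirst : (∑ p ∈ adjPairs G,
          (Finset.univ.filter fun i : Fin Δ => Sum.inl (p.1, i) ∈ S').card *
          (Finset.univ.filter fun j : Fin Δ => Sum.inl (p.2, j) ∉ S').card)
          = Δ ^ 2 * maxCut G := by
        have step : ∀ p ∈ adjPairs G,
            (Finset.univ.filter fun i : Fin Δ => Sum.inl (p.1, i) ∈ S').card *
            (Finset.univ.filter fun j : Fin Δ => Sum.inl (p.2, j) ∉ S').card
            = if p.1 ∈ S0 ∧ p.2 ∉ S0 then Δ ^ 2 else 0 := by
          intro p _
          rw [hcA, hcA']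
          by_cases h1 : p.1 ∈ S0 <;> by_cases h2 : p.2 ∈ S0 <;> simp [h1, h2] <;> ring
        rw [Finset.sum_congr rfl step, Finset.sum_ite, Finset.sum_const, Finset.sum_const]
        simp only [smul_eq_mul, mul_zero, add_zero]
        have hff : (adjPairs G).filter (fun p => p.1 ∈ S0 ∧ p.2 ∉ S0) =
            Finset.univ.filter fun p : V × V => G.Adj p.1 p.2 ∧ p.1 ∈ S0 ∧ p.2 ∉ S0 := by
          rw [adjPairs, Finset.filter_filter]
        rw [hff]
        have : (Finset.univ.filter fun p : V × V =>
            G.Adj p.1 p.2 ∧ p.1 ∈ S0 ∧ p.2 ∉ S0).card = maxCut G := by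
          simp only [maxCut]; rw [hS0]; rfl
        rw [this]; ring
      have hsecond : (∑ u : V,
          ((Finset.univ.filter fun i : Fin Δ => Sum.inl (u, i) ∈ S').card *
           (Finset.univ.filter fun j : Fin (5*Δ) => Sum.inr (u, j) ∉ S').card
           + (Finset.univ.filter fun j : Fin (5*Δ) => Sum.inr (u, j) ∈ S').card *
             (Finset.univ.filter fun i : Fin Δ => Sum.inl (u, i) ∉ S').card))
          = 5 * Δ ^ 2 * n := by
        have step : ∀ u : V,
            (Finset.univ.filter fun i : Fin Δ => Sum.inl (u, i) ∈ S').card *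
            (Finset.univ.filter fun j : Fin (5*Δ) => Sum.inr (u, j) ∉ S').card
            + (Finset.univ.filter fun j : Fin (5*Δ) => Sum.inr (u, j) ∈ S').card *
              (Finset.univ.filter fun i : Fin Δ => Sum.inl (u, i) ∉ S').card
            = 5 * Δ ^ 2 := by
          intro u
          rw [hcA, hcA', hcB, hcB']
          by_cases h : u ∈ S0 <;> simp [h] <;> ring
        rw [Finset.sum_congr rfl fun u _ => step u, Finset.sum_const, Finset.card_univ, hn,
          smul_eq_mul]
        ring
      rw [hfirst, hsecond]
    rw [← hval]
    exact Finset.le_sup (Finset.mem_univ S')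
end

section
/- Let φ be an instance of 2-SAT over variable set V with |V| = n and a family of M clauses, each a disjunction of two literals over V, and let k ≥ 3 be an integer. Construct a k-SAT instance ψ over variable set V ∪ {x_{(t,j)} : 1 ≤ t ≤ k−2, 1 ≤ j ≤ n} as follows: for each clause (l1 ∨ l2) of φ, each tuple (i_1,…,i_{k−2}) ∈ {1,…,n}^{k−2}, and each subset S ⊆ {1,…,k−2}, include the clause (l1 ∨ l2 ∨ λ_1 ∨ ⋯ ∨ λ_{k−2}), where λ_t = ¬x_{(t,i_t)} if t ∈ S and λ_t = x_{(t,i_t)} otherwise. Then for every truth assignment σ to all the variables of ψ, the number of clauses of ψ satisfied by σ equals n^{k−2}·((2^{k−2}−1)·M + S(σ)), where S(σ) is the number of clauses of φ satisfied by the restriction of σ to V. -/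
open Classical in
/-- 2-SAT to k-SAT padding reduction: variables of ψ are V ⊕ (groups × V);
    literals are (variable, polarity) pairs, and a literal (v, b) is satisfied
    by σ iff σ v = b. For every assignment σ to all variables of ψ, the number
    of satisfied clauses of ψ (indexed by a clause of φ, a tuple
    (i_1,…,i_{k−2}) ∈ {1,…,n}^{k−2} and a negation pattern S) equals
    n^{k−2}·((2^{k−2}−1)·M + S(σ)). -/
theorem twosat_to_ksat_clause_count (n M k : ℕ) (hk : 3 ≤ k)
    (φ : Fin M → ((Fin n × Bool) × (Fin n × Bool)))
    (σ : (Fin n ⊕ (Fin (k - 2) × Fin n)) → Bool) :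
    ((Finset.univ.filter fun ct : Fin M × (Fin (k - 2) → Fin n) × (Fin (k - 2) → Bool) =>
        (σ (Sum.inl (φ ct.1).1.1) = (φ ct.1).1.2) ∨
        (σ (Sum.inl (φ ct.1).2.1) = (φ ct.1).2.2) ∨
        (∃ t : Fin (k - 2), σ (Sum.inr (t, ct.2.1 t)) = !(ct.2.2 t))).card) =
      n ^ (k - 2) * ((2 ^ (k - 2) - 1) * M +
        (Finset.univ.filter fun cl : Fin M =>
          (σ (Sum.inl (φ cl).1.1) = (φ cl).1.2) ∨
          (σ (Sum.inl (φ cl).2.1) = (φ cl).2.2)).card) := by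
  classical
  have hA : True := trivial
  have key : ∀ (c : Fin M) (i : Fin (k - 2) → Fin n),
      (∑ b : Fin (k - 2) → Bool,
        if (((σ (Sum.inl (φ c).1.1) = (φ c).1.2) ∨ (σ (Sum.inl (φ c).2.1) = (φ c).2.2)) ∨ ∃ t : Fin (k - 2), σ (Sum.inr (t, i t)) = !(b t)) then 1 else 0)
        = (2 ^ (k - 2) - 1) + (if ((σ (Sum.inl (φ c).1.1) = (φ c).1.2) ∨ (σ (Sum.inl (φ c).2.1) = (φ c).2.2)) then 1 else 0) := by
    intro c i
    by_cases h : ((σ (Sum.inl (φ c).1.1) = (φ c).1.2) ∨ (σ (Sum.inl (φ c).2.1) = (φ c).2.2))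
    · simp only [h, true_or, if_true]
      rw [Finset.sum_const, smul_eq_mul, mul_one]
      have h2 : (1:ℕ) ≤ 2 ^ (k - 2) := Nat.one_le_two_pow
      simp [Fintype.card_fun]
      omega
    · simp only [h, false_or, if_false, add_zero]
      have hiff : ∀ b : Fin (k - 2) → Bool,
          (∃ t : Fin (k - 2), σ (Sum.inr (t, i t)) = !(b t)) ↔
            b ≠ (fun t => σ (Sum.inr (t, i t))) := by
        intro b
        constructor
        · rintro ⟨t, ht⟩ hb
          subst hb
          simp at ht
        · intro hb
          by_contra hc
          push_neg at hc
          apply hb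
          funext t
          have := hc t
          cases hbt : b t <;> cases hst : σ (Sum.inr (t, i t)) <;> simp_all
      calc (∑ b : Fin (k - 2) → Bool,
          if (∃ t : Fin (k - 2), σ (Sum.inr (t, i t)) = !(b t)) then 1 else 0)
          = (Finset.univ.filter fun b : Fin (k - 2) → Bool =>
              b ≠ (fun t => σ (Sum.inr (t, i t)))).card := by
            rw [Finset.card_filter]
            exact Finset.sum_congr rfl (fun b _ => by rw [if_congr (hiff b) rfl rfl])
        _ = 2 ^ (k - 2) - 1 := by
            rw [Finset.filter_ne', Finset.card_erase_of_mem (Finset.mem_univ _)]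
            simp [Fintype.card_fun]
  calc ((Finset.univ.filter fun ct : Fin M × (Fin (k - 2) → Fin n) × (Fin (k - 2) → Bool) =>
        (σ (Sum.inl (φ ct.1).1.1) = (φ ct.1).1.2) ∨
        (σ (Sum.inl (φ ct.1).2.1) = (φ ct.1).2.2) ∨
        (∃ t : Fin (k - 2), σ (Sum.inr (t, ct.2.1 t)) = !(ct.2.2 t))).card)
      = ∑ c : Fin M, ∑ i : Fin (k - 2) → Fin n, ∑ b : Fin (k - 2) → Bool,
          if (((σ (Sum.inl (φ c).1.1) = (φ c).1.2) ∨ (σ (Sum.inl (φ c).2.1) = (φ c).2.2)) ∨ ∃ t : Fin (k - 2), σ (Sum.inr (t, i t)) = !(b t)) then 1 else 0 := by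
        rw [Finset.card_filter, Fintype.sum_prod_type]
        refine Finset.sum_congr rfl fun c _ => ?_
        rw [Fintype.sum_prod_type]
        refine Finset.sum_congr rfl fun i _ => Finset.sum_congr rfl fun b _ => ?_
        simp [or_assoc]
    _ = ∑ c : Fin M, ∑ _i : Fin (k - 2) → Fin n, ((2 ^ (k - 2) - 1) + (if ((σ (Sum.inl (φ c).1.1) = (φ c).1.2) ∨ (σ (Sum.inl (φ c).2.1) = (φ c).2.2)) then 1 else 0)) := by
        refine Finset.sum_congr rfl fun c _ => Finset.sum_congr rfl fun i _ => key c i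
    _ = n ^ (k - 2) * ((2 ^ (k - 2) - 1) * M +
        (Finset.univ.filter fun cl : Fin M => ((σ (Sum.inl (φ cl).1.1) = (φ cl).1.2) ∨ (σ (Sum.inl (φ cl).2.1) = (φ cl).2.2))).card) := by
        simp only [Finset.sum_const, Finset.card_univ, Fintype.card_fun, Fintype.card_fin,
          Fintype.card_bool, smul_eq_mul]
        rw [← Finset.mul_sum, Finset.sum_add_distrib, Finset.sum_const, Finset.card_univ,
          Fintype.card_fin, ← Finset.card_filter, smul_eq_mul, Nat.mul_comm M]
end
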